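/- arXiv:1301.4639 — 4 statements merged into one kernel-verified Lean document; each statement's English description precedes it below -/
import Mathlib

section
/- Let G be a 3-regular finite simple connected super-λ' graph of order 2n with n ≥ 4. Then the girth of G is strictly greater than 4, and n ≠ 4 (hence n ≥ 5). -/
open SimpleGraph

variable {V : Type*}

/-- The degree of a vertex, as the cardinality of its neighbor set. -/
noncomputable def degN (G : SimpleGraph V) (v : V) : ℕ := (G.neighborSet v).ncard

/-- The minimum degree `δ(G)`. -/
noncomputable def minDeg (G : SimpleGraph V) : ℕ := sInf {k | ∃ v, degN G v = k}

/-- `d_G(X)`: the number of edges of `G` with exactly one endpoint in `X`. -/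
noncomputable def dOut (G : SimpleGraph V) (X : Set V) : ℕ :=
  {e ∈ G.edgeSet | ∃ x ∈ X, ∃ y ∈ Xᶜ, e = s(x, y)}.ncard

/-- `F` is an `h`-extra edge-cut of `G`: a set of edges of `G` whose removal disconnects `G`
and such that every connected component of `G - F` has more than `h` vertices. -/
def IsExtraEdgeCut (G : SimpleGraph V) (h : ℕ) (F : Set (Sym2 V)) : Prop :=
  F ⊆ G.edgeSet ∧ ¬(G.deleteEdges F).Connected ∧
    ∀ c : (G.deleteEdges F).ConnectedComponent, h < c.supp.ncard

/-- `G` is `λ^(h)`-connected: an `h`-extra edge-cut exists. -/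
def LambdaConn (G : SimpleGraph V) (h : ℕ) : Prop := ∃ F, IsExtraEdgeCut G h F

/-- The `h`-extra edge-connectivity `λ^(h)(G)`: the minimum cardinality of an
`h`-extra edge-cut. -/
noncomputable def lambdaH (G : SimpleGraph V) (h : ℕ) : ℕ :=
  sInf {k | ∃ F, IsExtraEdgeCut G h F ∧ F.ncard = k}

/-- `ξ_h(G)`: the minimum of `d_G(X)` over vertex sets `X` of size `h + 1` inducing a
connected subgraph. -/
noncomputable def xiH (G : SimpleGraph V) (h : ℕ) : ℕ :=
  sInf {k | ∃ X : Set V, X.ncard = h + 1 ∧ (G.induce X).Connected ∧ dOut G X = k}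

/-- `G` is super-`λ^(h)`: it is connected, `λ^(h)`-connected, `λ^(h)`-optimal
(`λ^(h)(G) = ξ_h(G)`), and every minimum `h`-extra edge-cut leaves a component with
exactly `h + 1` vertices. -/
def SuperLambda (G : SimpleGraph V) (h : ℕ) : Prop :=
  G.Connected ∧ LambdaConn G h ∧ lambdaH G h = xiH G h ∧
    ∀ F : Set (Sym2 V), IsExtraEdgeCut G h F → F.ncard = lambdaH G h →
      ∃ c : (G.deleteEdges F).ConnectedComponent, c.supp.ncard = h + 1

/-- The persistence `ρ^(h)(G)`: the largest `m` such that `G - F` is super-`λ^(h)` for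
every set `F` of at most `m` edges of `G`. -/
noncomputable def rhoH (G : SimpleGraph V) (h : ℕ) : ℕ :=
  sSup {m : ℕ | ∀ F : Set (Sym2 V), F ⊆ G.edgeSet → F.ncard ≤ m →
    SuperLambda (G.deleteEdges F) h}

/-- `ξ(G)`: the minimum edge-degree `deg x + deg y - 2` over the edges `xy` of `G`. -/
noncomputable def xiEdge (G : SimpleGraph V) : ℕ :=
  sInf {k | ∃ x y, G.Adj x y ∧ degN G x + degN G y - 2 = k}

/-- `η(G)`: the number of edges of `G` whose edge-degree equals `ξ(G)`. -/
noncomputable def eta (G : SimpleGraph V) : ℕ :=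
  {e ∈ G.edgeSet | ∃ x y, e = s(x, y) ∧ degN G x + degN G y - 2 = xiEdge G}.ncard

private lemma walk_closed {H : SimpleGraph V} {S : Set V}
    (hS : ∀ ⦃u w : V⦄, u ∈ S → H.Adj u w → w ∈ S) {u w : V} (p : H.Walk u w) :
    u ∈ S → w ∈ S := by
  induction p with
  | nil => exact id
  | cons h q ih => exact fun hu => ih (hS hu h)

private lemma supp_closed {H : SimpleGraph V} (c : H.ConnectedComponent) {u w : V}
    (hu : u ∈ c.supp) (h : H.Adj u w) : w ∈ c.supp := by
  rw [SimpleGraph.ConnectedComponent.mem_supp_iff] at hu ⊢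
  rw [← hu]
  exact SimpleGraph.ConnectedComponent.sound h.symm.reachable

private lemma pair_adj {H : SimpleGraph V} {x y : V} (hxy : x ≠ y)
    (hcl : ∀ ⦃u w : V⦄, u ∈ ({x, y} : Set V) → H.Adj u w → w ∈ ({x, y} : Set V))
    (hr : H.Reachable x y) : H.Adj x y := by
  obtain ⟨p⟩ := hr
  cases p with
  | nil => exact absurd rfl hxy
  | @cons _ b _ h q =>
    have hb : b ∈ ({x, y} : Set V) := hcl (Set.mem_insert _ _) h
    rcases hb with hb | hb
    · exact absurd hb.symm h.ne
    · rw [Set.mem_singleton_iff] at hb; subst hb; exact h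

private lemma comp_two {H : SimpleGraph V} (c : H.ConnectedComponent)
    (h2 : c.supp.ncard = 2) :
    ∃ x y, x ≠ y ∧ c.supp = {x, y} ∧ H.Adj x y := by
  obtain ⟨x, y, hxy, hsupp⟩ := Set.ncard_eq_two.mp h2
  refine ⟨x, y, hxy, hsupp, ?_⟩
  have hx : x ∈ c.supp := by rw [hsupp]; exact Set.mem_insert _ _
  have hy : y ∈ c.supp := by rw [hsupp]; simp
  have hr : H.Reachable x y := by
    rw [SimpleGraph.ConnectedComponent.mem_supp_iff] at hx hy
    exact SimpleGraph.ConnectedComponent.exact (hx.trans hy.symm)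
  refine pair_adj hxy (fun u w hu h => ?_) hr
  rw [← hsupp]
  exact supp_closed c (by rw [hsupp]; exact hu) h

/-- In a 3-regular graph, every vertex adjacent (in `G - F`) pair `{x,y}` forming a whole
component of `G - F` forces 4 distinct edges of `G` into `F`. -/
private lemma four_le_of_pair_comp [Fintype V] {G : SimpleGraph V} {F : Set (Sym2 V)}
    (hreg : ∀ v, degN G v = 3) {x y : V}
    (hxy : x ≠ y) (hadj : (G.deleteEdges F).Adj x y)
    (hsupp : ((G.deleteEdges F).connectedComponentMk x).supp = {x, y}) :
    4 ≤ F.ncard := by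
  have hdeg : ∀ v, (G.neighborSet v).ncard = 3 := fun v => hreg v
  have hyx : y ∈ G.neighborSet x := hadj.1
  have hxyn : x ∈ G.neighborSet y := hadj.1.symm
  have hnx : (G.neighborSet x \ {y}).ncard = 2 := by
    rw [Set.ncard_diff_singleton_of_mem hyx, hdeg x]
  have hny : (G.neighborSet y \ {x}).ncard = 2 := by
    rw [Set.ncard_diff_singleton_of_mem hxyn, hdeg y]
  obtain ⟨u₁, u₂, hu12, hu⟩ := Set.ncard_eq_two.mp hnx
  obtain ⟨v₁, v₂, hv12, hv⟩ := Set.ncard_eq_two.mp hny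
  have hu₁ : u₁ ∈ G.neighborSet x \ {y} := by rw [hu]; exact Set.mem_insert _ _
  have hu₂ : u₂ ∈ G.neighborSet x \ {y} := by rw [hu]; simp
  have hv₁ : v₁ ∈ G.neighborSet y \ {x} := by rw [hv]; exact Set.mem_insert _ _
  have hv₂ : v₂ ∈ G.neighborSet y \ {x} := by rw [hv]; simp
  -- membership of x, y in the component supp
  have hxs : x ∈ ((G.deleteEdges F).connectedComponentMk x).supp := by
    rw [SimpleGraph.ConnectedComponent.mem_supp_iff]
  -- each of the four boundary edges lies in F
  have key : ∀ w ∈ G.neighborSet x \ {y}, s(x, w) ∈ F := by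
    intro w hw
    by_contra hnot
    have hadj' : (G.deleteEdges F).Adj x w := by
      rw [SimpleGraph.deleteEdges_adj]; exact ⟨hw.1, hnot⟩
    have : w ∈ ({x, y} : Set V) := by
      rw [← hsupp]; exact supp_closed _ hxs hadj'
    rcases this with h | h
    · exact hadj'.ne' h
    · exact hw.2 h
  have key' : ∀ w ∈ G.neighborSet y \ {x}, s(y, w) ∈ F := by
    intro w hw
    by_contra hnot
    have hadj' : (G.deleteEdges F).Adj y w := by
      rw [SimpleGraph.deleteEdges_adj]; exact ⟨hw.1, hnot⟩
    have hys : y ∈ ((G.deleteEdges F).connectedComponentMk x).supp := by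
      rw [hsupp]; simp
    have : w ∈ ({x, y} : Set V) := by
      rw [← hsupp]; exact supp_closed _ hys hadj'
    rcases this with h | h
    · exact hw.2 h
    · exact hadj'.ne' h
  have hsub : ({s(x, u₁), s(x, u₂), s(y, v₁), s(y, v₂)} : Set (Sym2 V)) ⊆ F := by
    rintro e (rfl | rfl | rfl | rfl)
    · exact key u₁ hu₁
    · exact key u₂ hu₂
    · exact key' v₁ hv₁
    · exact key' v₂ hv₂
  have hxu₁ : x ≠ u₁ := fun h => G.irrefl (h ▸ hu₁.1)
  have hxu₂ : x ≠ u₂ := fun h => G.irrefl (h ▸ hu₂.1)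
  have hyv₁ : y ≠ v₁ := fun h => G.irrefl (h ▸ hv₁.1)
  have hyv₂ : y ≠ v₂ := fun h => G.irrefl (h ▸ hv₂.1)
  have hxv₁ : x ≠ v₁ := fun h => hv₁.2 h.symm
  have hxv₂ : x ≠ v₂ := fun h => hv₂.2 h.symm
  have hyu₁ : y ≠ u₁ := fun h => hu₁.2 h.symm
  have hyu₂ : y ≠ u₂ := fun h => hu₂.2 h.symm
  have hcard : ({s(x, u₁), s(x, u₂), s(y, v₁), s(y, v₂)} : Set (Sym2 V)).ncard = 4 := by
    rw [Set.ncard_insert_of_notMem (by simp [Sym2.eq_iff]; tauto) (Set.toFinite _),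
        Set.ncard_insert_of_notMem (by simp [Sym2.eq_iff]; tauto) (Set.toFinite _),
        Set.ncard_pair (by simp [Sym2.eq_iff]; tauto)]
  calc 4 = ({s(x, u₁), s(x, u₂), s(y, v₁), s(y, v₂)} : Set (Sym2 V)).ncard := hcard.symm
    _ ≤ F.ncard := Set.ncard_le_ncard hsub (Set.toFinite _)

private lemma four_le_lambda [Fintype V] {G : SimpleGraph V}
    (hreg : ∀ v, degN G v = 3) (hs : SuperLambda G 1) : 4 ≤ lambdaH G 1 := by
  obtain ⟨hconn, ⟨F₀, hF₀⟩, hopt, hsuper⟩ := hs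
  have hne : Set.Nonempty {k | ∃ F, IsExtraEdgeCut G 1 F ∧ F.ncard = k} :=
    ⟨F₀.ncard, F₀, hF₀, rfl⟩
  obtain ⟨F, hF, hFcard⟩ := Nat.sInf_mem hne
  obtain ⟨c, hc⟩ := hsuper F hF hFcard
  obtain ⟨x, y, hxy, hsupp, hadj⟩ := comp_two c hc
  have hcx : (G.deleteEdges F).connectedComponentMk x = c := by
    rw [← SimpleGraph.ConnectedComponent.mem_supp_iff, hsupp]
    exact Set.mem_insert _ _
  unfold lambdaH
  rw [← hFcard]
  exact four_le_of_pair_comp hreg hxy hadj (by rw [hcx, hsupp])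


private def bd (G : SimpleGraph V) (X : Set V) : Set (Sym2 V) :=
  {e ∈ G.edgeSet | ∃ x ∈ X, ∃ y ∈ Xᶜ, e = s(x, y)}

private lemma mem_bd {G : SimpleGraph V} {X : Set V} {e : Sym2 V} :
    e ∈ bd G X ↔ ∃ u v, G.Adj u v ∧ u ∈ X ∧ v ∉ X ∧ e = s(u, v) := by
  constructor
  · rintro ⟨he, u, hu, v, hv, rfl⟩
    exact ⟨u, v, (SimpleGraph.mem_edgeSet G).mp he, hu, hv, rfl⟩
  · rintro ⟨u, v, hadj, hu, hv, rfl⟩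
    exact ⟨(SimpleGraph.mem_edgeSet G).mpr hadj, u, hu, v, hv, rfl⟩


private lemma bd_adj_iff {G : SimpleGraph V} {X : Set V} {u w : V}
    (h : (G.deleteEdges (bd G X)).Adj u w) : (u ∈ X ↔ w ∈ X) := by
  rw [SimpleGraph.deleteEdges_adj] at h
  obtain ⟨hadj, hne⟩ := h
  constructor
  · intro hu; by_contra hw
    exact hne (mem_bd.mpr ⟨u, w, hadj, hu, hw, rfl⟩)
  · intro hw; by_contra hu
    exact hne (mem_bd.mpr ⟨w, u, hadj.symm, hw, hu, Sym2.eq_swap⟩)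

private lemma bd_adj_of_adj {G : SimpleGraph V} {X : Set V} {u w : V}
    (hadj : G.Adj u w) (hmem : u ∈ X ↔ w ∈ X) : (G.deleteEdges (bd G X)).Adj u w := by
  rw [SimpleGraph.deleteEdges_adj]
  refine ⟨hadj, fun hm => ?_⟩
  obtain ⟨a, b, hab, ha, hb, heq⟩ := mem_bd.mp hm
  rw [Sym2.eq_iff] at heq
  rcases heq with ⟨rfl, rfl⟩ | ⟨rfl, rfl⟩
  · exact hb (hmem.mp ha)
  · exact hb (hmem.mpr ha)

private lemma bd_subset' (G : SimpleGraph V) (X : Set V) :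
    bd G X ⊆ ⋃ a ∈ X, (fun w => s(a, w)) '' (G.neighborSet a \ X) := by
  intro e he
  obtain ⟨u, v, hadj, hu, hv, rfl⟩ := mem_bd.mp he
  exact Set.mem_biUnion hu ⟨v, ⟨hadj, hv⟩, rfl⟩


private lemma bd_cut [Fintype V] {G : SimpleGraph V} {X : Set V}
    (hX2 : ∀ u ∈ X, ∃ w ∈ X, G.Adj u w)
    (hout : ∀ u ∉ X, ∃ w, w ∉ X ∧ G.Adj u w)
    (hx0 : X.Nonempty) (hproper : ∃ v, v ∉ X) :
    IsExtraEdgeCut G 1 (bd G X) := by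
  have hclX : ∀ ⦃u w : V⦄, u ∈ X → (G.deleteEdges (bd G X)).Adj u w → w ∈ X :=
    fun u w hu h => (bd_adj_iff h).mp hu
  refine ⟨fun e he => he.1, ?_, ?_⟩
  · intro hcon
    obtain ⟨x, hx⟩ := hx0
    obtain ⟨v, hv⟩ := hproper
    obtain ⟨p⟩ := hcon.preconnected x v
    exact hv (walk_closed hclX p hx)
  · intro c
    obtain ⟨u, hu⟩ := c.exists_rep
    subst hu
    rw [Set.one_lt_ncard (Set.toFinite _)]
    have hu_supp : u ∈ (((G.deleteEdges (bd G X)).connectedComponentMk u)).supp := by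
      rw [SimpleGraph.ConnectedComponent.mem_supp_iff]
    by_cases hu : u ∈ X
    · obtain ⟨w, hw, hadj⟩ := hX2 u hu
      have hadj' := bd_adj_of_adj hadj (iff_of_true hu hw)
      exact ⟨u, hu_supp, w, supp_closed _ hu_supp hadj', hadj.ne⟩
    · obtain ⟨w, hw, hadj⟩ := hout u hu
      have hadj' := bd_adj_of_adj hadj (iff_of_false hu hw)
      exact ⟨u, hu_supp, w, supp_closed _ hu_supp hadj', hadj.ne⟩

private lemma nbr_diff_le_one [Fintype V] {G : SimpleGraph V} {a b c : V} {X : Set V}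
    (hdeg : (G.neighborSet a).ncard = 3) (hb : b ∈ G.neighborSet a) (hc : c ∈ G.neighborSet a)
    (hbc : b ≠ c) (hbX : b ∈ X) (hcX : c ∈ X) : (G.neighborSet a \ X).ncard ≤ 1 := by
  have hsub : G.neighborSet a \ X ⊆ G.neighborSet a \ {b, c} := by
    rintro w ⟨hw1, hw2⟩
    refine ⟨hw1, ?_⟩
    rintro (rfl | rfl)
    · exact hw2 hbX
    · exact hw2 hcX
  have h2 : ({b, c} : Set V) ⊆ G.neighborSet a := by
    rintro w (rfl | rfl) <;> assumption
  calc (G.neighborSet a \ X).ncard ≤ (G.neighborSet a \ {b, c}).ncard :=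
        Set.ncard_le_ncard hsub (Set.toFinite _)
    _ = 1 := by rw [Set.ncard_diff h2 (Set.toFinite _), hdeg, Set.ncard_pair hbc]

private lemma im_ncard_le_one [Fintype V] {G : SimpleGraph V} {a b c : V} {X : Set V}
    (hdeg : (G.neighborSet a).ncard = 3) (hb : b ∈ G.neighborSet a) (hc : c ∈ G.neighborSet a)
    (hbc : b ≠ c) (hbX : b ∈ X) (hcX : c ∈ X) :
    ((fun w => s(a, w)) '' (G.neighborSet a \ X)).ncard ≤ 1 :=
  le_trans (Set.ncard_image_le (Set.toFinite _)) (nbr_diff_le_one hdeg hb hc hbc hbX hcX)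

/-- Whole vertex set is covered by any adjacency-closed set containing a vertex,
when the graph is connected. -/
private lemma univ_subset_closed {G : SimpleGraph V} (hconn : G.Connected) {S : Set V}
    (hS : ∀ ⦃u w : V⦄, u ∈ S → G.Adj u w → w ∈ S) {x : V} (hx : x ∈ S) (v : V) : v ∈ S := by
  obtain ⟨p⟩ := hconn.preconnected x v
  exact walk_closed hS p hx

private lemma no_triangle [Fintype V] {G : SimpleGraph V} {n : ℕ} (hn : 4 ≤ n)
    (hcard : Fintype.card V = 2 * n) (hreg : ∀ v, degN G v = 3) (hs : SuperLambda G 1) :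
    ∀ x y z : V, G.Adj x y → G.Adj y z → G.Adj x z → False := by
  intro x y z hxy hyz hxz
  have hdeg : ∀ v, (G.neighborSet v).ncard = 3 := fun v => hreg v
  have hconn : G.Connected := hs.1
  set X : Set V := {x, y, z} with hX
  have hxX : x ∈ X := by simp [hX]
  have hyX : y ∈ X := by simp [hX]
  have hzX : z ∈ X := by simp [hX]
  have hXle : X.ncard ≤ 3 :=
    le_trans (Set.ncard_insert_le _ _) (by
      have := Set.ncard_insert_le y ({z} : Set V)
      simp only [Set.ncard_singleton] at this ⊢
      omega)
  have hcard8 : 8 ≤ Fintype.card V := by omega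
  have hproper : ∃ v, v ∉ X := by
    by_contra hcon
    push_neg at hcon
    have : (Set.univ : Set V).ncard ≤ X.ncard :=
      Set.ncard_le_ncard (fun v _ => hcon v) (Set.toFinite _)
    rw [Set.ncard_univ, Nat.card_eq_fintype_card] at this
    omega
  -- every vertex outside X has a neighbor outside X
  have hout : ∀ u ∉ X, ∃ w, w ∉ X ∧ G.Adj u w := by
    intro u hu
    by_contra hcon
    push_neg at hcon
    have hNsub : G.neighborSet u ⊆ X := by
      intro w hw
      by_contra hwX
      exact hcon w hwX hw
    have hX3 : X.ncard = 3 := by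
      rw [hX]
      rw [Set.ncard_insert_of_notMem (by simp [hxy.ne, hxz.ne]) (Set.toFinite _),
          Set.ncard_insert_of_notMem (by simp [hyz.ne]) (Set.toFinite _),
          Set.ncard_singleton]
    have hNeq : G.neighborSet u = X :=
      Set.eq_of_subset_of_ncard_le hNsub (by rw [hdeg, hX3]) (Set.toFinite _)
    have hux : G.Adj u x := by rw [← SimpleGraph.mem_neighborSet, hNeq]; exact hxX
    have huy : G.Adj u y := by rw [← SimpleGraph.mem_neighborSet, hNeq]; exact hyX
    have huz : G.Adj u z := by rw [← SimpleGraph.mem_neighborSet, hNeq]; exact hzX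
    have huX : u ∉ X := hu
    have hu_ne : u ≠ x ∧ u ≠ y ∧ u ≠ z := ⟨hux.ne, huy.ne, huz.ne⟩
    -- neighborhoods of x, y, z are exactly the other three vertices
    have hNx : G.neighborSet x = {y, z, u} := by
      refine (Set.eq_of_subset_of_ncard_le ?_ ?_ (Set.toFinite _)).symm
      · rintro w (rfl | rfl | rfl)
        · exact hxy
        · exact hxz
        · exact hux.symm
      · rw [hdeg]
        rw [Set.ncard_insert_of_notMem (by simp [hyz.ne, huy.ne']) (Set.toFinite _),
            Set.ncard_insert_of_notMem (by simp [huz.ne']) (Set.toFinite _),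
            Set.ncard_singleton]
    have hNy : G.neighborSet y = {x, z, u} := by
      refine (Set.eq_of_subset_of_ncard_le ?_ ?_ (Set.toFinite _)).symm
      · rintro w (rfl | rfl | rfl)
        · exact hxy.symm
        · exact hyz
        · exact huy.symm
      · rw [hdeg]
        rw [Set.ncard_insert_of_notMem (by simp [hxz.ne, hux.ne']) (Set.toFinite _),
            Set.ncard_insert_of_notMem (by simp [huz.ne']) (Set.toFinite _),
            Set.ncard_singleton]
    have hNz : G.neighborSet z = {x, y, u} := by
      refine (Set.eq_of_subset_of_ncard_le ?_ ?_ (Set.toFinite _)).symm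
      · rintro w (rfl | rfl | rfl)
        · exact hxz.symm
        · exact hyz.symm
        · exact huz.symm
      · rw [hdeg]
        rw [Set.ncard_insert_of_notMem (by simp [hxy.ne, hux.ne']) (Set.toFinite _),
            Set.ncard_insert_of_notMem (by simp [huy.ne']) (Set.toFinite _),
            Set.ncard_singleton]
    -- S = {x,y,z,u} is adjacency-closed
    set S : Set V := {x, y, z, u} with hS
    have hclosed : ∀ ⦃p w : V⦄, p ∈ S → G.Adj p w → w ∈ S := by
      rintro p w (rfl | rfl | rfl | rfl) hpw
      · have : w ∈ G.neighborSet p := hpw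
        rw [hNx] at this
        rcases this with rfl | rfl | rfl <;> simp [hS]
      · have : w ∈ G.neighborSet p := hpw
        rw [hNy] at this
        rcases this with rfl | rfl | rfl <;> simp [hS]
      · have : w ∈ G.neighborSet p := hpw
        rw [hNz] at this
        rcases this with rfl | rfl | rfl <;> simp [hS]
      · have : w ∈ G.neighborSet p := hpw
        rw [hNeq] at this
        rcases this with rfl | rfl | rfl <;> simp [hS]
    have hall : ∀ v, v ∈ S := univ_subset_closed hconn hclosed (by simp [hS] : x ∈ S)
    have : (Set.univ : Set V).ncard ≤ S.ncard :=
      Set.ncard_le_ncard (fun v _ => hall v) (Set.toFinite _)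
    rw [Set.ncard_univ, Nat.card_eq_fintype_card] at this
    have hS4 : S.ncard ≤ 4 := by
      refine le_trans (Set.ncard_insert_le _ _) ?_
      have h1 := Set.ncard_insert_le y ({z, u} : Set V)
      have h2 := Set.ncard_insert_le z ({u} : Set V)
      simp only [Set.ncard_singleton] at h2
      omega
    omega
  -- each vertex of X has a neighbor in X
  have hX2 : ∀ u ∈ X, ∃ w ∈ X, G.Adj u w := by
    rintro u (rfl | rfl | rfl)
    · exact ⟨y, hyX, hxy⟩
    · exact ⟨x, hxX, hxy.symm⟩
    · exact ⟨x, hxX, hxz.symm⟩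
  have hcut : IsExtraEdgeCut G 1 (bd G X) := bd_cut hX2 hout ⟨x, hxX⟩ hproper
  -- cardinality of the cut is at most 3
  have hbd3 : (bd G X).ncard ≤ 3 := by
    have hsub := bd_subset' G X
    rw [hX] at hsub
    simp only [Set.biUnion_insert, Set.biUnion_singleton] at hsub
    calc (bd G X).ncard ≤ _ := Set.ncard_le_ncard hsub (Set.toFinite _)
      _ ≤ _ + _ := Set.ncard_union_le _ _
      _ ≤ 3 := by
          have h1 := im_ncard_le_one (hdeg x) (hxy : y ∈ G.neighborSet x) hxz hyz.ne hyX hzX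
          have h2 := im_ncard_le_one (hdeg y) (hxy.symm : x ∈ G.neighborSet y) hyz
            (fun h => G.irrefl (h ▸ hxz) : x ≠ z) hxX hzX
          have h3 := im_ncard_le_one (hdeg z) (hxz.symm : x ∈ G.neighborSet z) hyz.symm
            hxy.ne hxX hyX
          have h4 := Set.ncard_union_le ((fun w => s(y, w)) '' (G.neighborSet y \ X))
            ((fun w => s(z, w)) '' (G.neighborSet z \ X))
          rw [hX] at h1 h2 h3 h4
          omega
  have hle : lambdaH G 1 ≤ (bd G X).ncard := Nat.sInf_le ⟨bd G X, hcut, rfl⟩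
  have h4 := four_le_lambda hreg hs
  omega

private lemma no_c4 [Fintype V] {G : SimpleGraph V} {n : ℕ} (hn : 4 ≤ n)
    (hcard : Fintype.card V = 2 * n) (hreg : ∀ v, degN G v = 3) (hs : SuperLambda G 1)
    (htri : ∀ x y z : V, G.Adj x y → G.Adj y z → G.Adj x z → False)
    {a b c d : V} (hac : a ≠ c) (hbd : b ≠ d)
    (hab : G.Adj a b) (hbc : G.Adj b c) (hcd : G.Adj c d) (hda : G.Adj d a) : False := by
  have hdeg : ∀ v, (G.neighborSet v).ncard = 3 := fun v => hreg v
  have hconn : G.Connected := hs.1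
  have hnac : ¬G.Adj a c := fun h => htri a b c hab hbc h
  have hnbd : ¬G.Adj b d := fun h => htri b c d hbc hcd h
  set X : Set V := {a, b, c, d} with hX
  have haX : a ∈ X := by simp [hX]
  have hbX : b ∈ X := by simp [hX]
  have hcX : c ∈ X := by simp [hX]
  have hdX : d ∈ X := by simp [hX]
  have hX4 : X.ncard = 4 := by
    rw [hX, Set.ncard_insert_of_notMem (by simp [hab.ne, hac, hda.ne']) (Set.toFinite _),
        Set.ncard_insert_of_notMem (by simp [hbc.ne, hbd]) (Set.toFinite _),
        Set.ncard_pair hcd.ne]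
  have hcard8 : 8 ≤ Fintype.card V := by omega
  have hproper : ∃ v, v ∉ X := by
    by_contra hcon
    push_neg at hcon
    have : (Set.univ : Set V).ncard ≤ X.ncard :=
      Set.ncard_le_ncard (fun v _ => hcon v) (Set.toFinite _)
    rw [Set.ncard_univ, Nat.card_eq_fintype_card] at this
    omega
  have hout : ∀ u ∉ X, ∃ w, w ∉ X ∧ G.Adj u w := by
    intro u hu
    by_contra hcon
    push_neg at hcon
    have hNsub : G.neighborSet u ⊆ X := fun w hw => by
      by_contra hwX; exact hcon w hwX hw
    by_cases hau : G.Adj u a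
    · by_cases hbu : G.Adj u b
      · exact htri u a b hau hab hbu
      · have hsub : G.neighborSet u ⊆ {a, c, d} := by
          intro w hw
          rcases hNsub hw with rfl | rfl | rfl | rfl
          · exact Set.mem_insert _ _
          · exact absurd hw hbu
          · simp
          · simp
        have h3 : ({a, c, d} : Set V).ncard = 3 := by
          rw [Set.ncard_insert_of_notMem (by simp [hac, hda.ne']) (Set.toFinite _),
              Set.ncard_pair hcd.ne]
        have hNeq : G.neighborSet u = {a, c, d} :=
          Set.eq_of_subset_of_ncard_le hsub (by rw [hdeg, h3]) (Set.toFinite _)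
        have huc : G.Adj u c := by
          have : c ∈ G.neighborSet u := by rw [hNeq]; simp
          exact this
        have hud : G.Adj u d := by
          have : d ∈ G.neighborSet u := by rw [hNeq]; simp
          exact this
        exact htri u c d huc hcd hud
    · have hsub : G.neighborSet u ⊆ {b, c, d} := by
        intro w hw
        rcases hNsub hw with rfl | rfl | rfl | rfl
        · exact absurd hw hau
        · exact Set.mem_insert _ _
        · simp
        · simp
      have h3 : ({b, c, d} : Set V).ncard = 3 := by
        rw [Set.ncard_insert_of_notMem (by simp [hbc.ne, hbd]) (Set.toFinite _),
            Set.ncard_pair hcd.ne]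
      have hNeq : G.neighborSet u = {b, c, d} :=
        Set.eq_of_subset_of_ncard_le hsub (by rw [hdeg, h3]) (Set.toFinite _)
      have hub : G.Adj u b := by
        have : b ∈ G.neighborSet u := by rw [hNeq]; exact Set.mem_insert _ _
        exact this
      have huc : G.Adj u c := by
        have : c ∈ G.neighborSet u := by rw [hNeq]; simp
        exact this
      exact htri u b c hub hbc huc
  have hX2 : ∀ u ∈ X, ∃ w ∈ X, G.Adj u w := by
    rintro u (rfl | rfl | rfl | rfl)
    · exact ⟨b, hbX, hab⟩
    · exact ⟨a, haX, hab.symm⟩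
    · exact ⟨b, hbX, hbc.symm⟩
    · exact ⟨a, haX, hda⟩
  have hcut : IsExtraEdgeCut G 1 (bd G X) := bd_cut hX2 hout ⟨a, haX⟩ hproper
  have hbd4 : (bd G X).ncard ≤ 4 := by
    have hsub := bd_subset' G X
    rw [hX] at hsub
    simp only [Set.biUnion_insert, Set.biUnion_singleton] at hsub
    have h1 := im_ncard_le_one (hdeg a) (hab : b ∈ G.neighborSet a)
      (hda.symm : d ∈ G.neighborSet a) hbd hbX hdX
    have h2 := im_ncard_le_one (hdeg b) (hab.symm : a ∈ G.neighborSet b)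
      (hbc : c ∈ G.neighborSet b) hac haX hcX
    have h3 := im_ncard_le_one (hdeg c) (hbc.symm : b ∈ G.neighborSet c)
      (hcd : d ∈ G.neighborSet c) hbd hbX hdX
    have h4 := im_ncard_le_one (hdeg d) (hcd.symm : c ∈ G.neighborSet d)
      (hda : a ∈ G.neighborSet d) (fun h => hac h.symm) hcX haX
    have g1 := Set.ncard_union_le ((fun w => s(c, w)) '' (G.neighborSet c \ X))
      ((fun w => s(d, w)) '' (G.neighborSet d \ X))
    have g2 := Set.ncard_union_le ((fun w => s(b, w)) '' (G.neighborSet b \ X))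
      ((fun w => s(c, w)) '' (G.neighborSet c \ X) ∪ (fun w => s(d, w)) '' (G.neighborSet d \ X))
    have g3 := Set.ncard_union_le ((fun w => s(a, w)) '' (G.neighborSet a \ X))
      ((fun w => s(b, w)) '' (G.neighborSet b \ X) ∪
        ((fun w => s(c, w)) '' (G.neighborSet c \ X) ∪ (fun w => s(d, w)) '' (G.neighborSet d \ X)))
    have g0 := Set.ncard_le_ncard hsub (Set.toFinite _)
    rw [hX] at h1 h2 h3 h4 g1 g2 g3 ⊢
    omega
  have hle : lambdaH G 1 ≤ (bd G X).ncard := Nat.sInf_le ⟨bd G X, hcut, rfl⟩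
  have h4lam := four_le_lambda hreg hs
  have hlam4 : lambdaH G 1 = 4 := by omega
  have hbdcard : (bd G X).ncard = 4 := by omega
  obtain ⟨c₀, hc₀⟩ := hs.2.2.2 (bd G X) hcut (by omega)
  obtain ⟨x, y, hxy, hsupp, hadjxy⟩ := comp_two c₀ hc₀
  -- the surviving cycle edges
  have hab' := bd_adj_of_adj hab (iff_of_true haX hbX)
  have hbc' := bd_adj_of_adj hbc (iff_of_true hbX hcX)
  have hcd' := bd_adj_of_adj hcd (iff_of_true hcX hdX)
  have hda' := bd_adj_of_adj hda (iff_of_true hdX haX)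
  -- no vertex of X lies in the two-element component
  have hXdisj : ∀ p ∈ X, p ∉ c₀.supp := by
    intro p hp hps
    have hall : X ⊆ c₀.supp := by
      have h1 : ∀ q ∈ c₀.supp, ∀ r, (G.deleteEdges (bd G X)).Adj q r → r ∈ c₀.supp :=
        fun q hq r h => supp_closed c₀ hq h
      rcases hp with rfl | rfl | rfl | rfl
      · have h2 := h1 p hps b hab'
        have h3 := h1 b h2 c hbc'
        have h4 := h1 c h3 d hcd'
        rintro w (rfl | rfl | rfl | rfl) <;> assumption
      · have h2 := h1 p hps a hab'.symm
        have h3 := h1 p hps c hbc'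
        have h4 := h1 c h3 d hcd'
        rintro w (rfl | rfl | rfl | rfl) <;> assumption
      · have h2 := h1 p hps b hbc'.symm
        have h3 := h1 b h2 a hab'.symm
        have h4 := h1 p hps d hcd'
        rintro w (rfl | rfl | rfl | rfl) <;> assumption
      · have h2 := h1 p hps a hda'
        have h3 := h1 a h2 b hab'
        have h4 := h1 b h3 c hbc'
        rintro w (rfl | rfl | rfl | rfl) <;> assumption
    have := Set.ncard_le_ncard hall (Set.toFinite _)
    rw [hX4, hc₀] at this
    omega
  have hxs : x ∈ c₀.supp := by rw [hsupp]; exact Set.mem_insert _ _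
  have hys : y ∈ c₀.supp := by rw [hsupp]; simp
  have hxX : x ∉ X := fun h => hXdisj x h hxs
  have hyX : y ∉ X := fun h => hXdisj y h hys
  have hGxy : G.Adj x y := hadjxy.1
  -- the two other neighbors of x and of y
  have hnx : (G.neighborSet x \ {y}).ncard = 2 := by
    rw [Set.ncard_diff_singleton_of_mem ((SimpleGraph.mem_neighborSet G x y).mpr hGxy), hdeg x]
  have hny : (G.neighborSet y \ {x}).ncard = 2 := by
    rw [Set.ncard_diff_singleton_of_mem ((SimpleGraph.mem_neighborSet G y x).mpr hGxy.symm), hdeg y]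
  obtain ⟨u₁, u₂, hu12, hu⟩ := Set.ncard_eq_two.mp hnx
  obtain ⟨v₁, v₂, hv12, hv⟩ := Set.ncard_eq_two.mp hny
  have hu₁ : u₁ ∈ G.neighborSet x \ {y} := by rw [hu]; exact Set.mem_insert _ _
  have hu₂ : u₂ ∈ G.neighborSet x \ {y} := by rw [hu]; simp
  have hv₁ : v₁ ∈ G.neighborSet y \ {x} := by rw [hv]; exact Set.mem_insert _ _
  have hv₂ : v₂ ∈ G.neighborSet y \ {x} := by rw [hv]; simp
  have keyx : ∀ w ∈ G.neighborSet x \ {y}, s(x, w) ∈ bd G X := by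
    intro w hw
    by_contra hnot
    have hadj' : (G.deleteEdges (bd G X)).Adj x w := by
      rw [SimpleGraph.deleteEdges_adj]; exact ⟨hw.1, hnot⟩
    have : w ∈ ({x, y} : Set V) := by rw [← hsupp]; exact supp_closed _ hxs hadj'
    rcases this with h | h
    · exact hadj'.ne' h
    · exact hw.2 h
  have keyy : ∀ w ∈ G.neighborSet y \ {x}, s(y, w) ∈ bd G X := by
    intro w hw
    by_contra hnot
    have hadj' : (G.deleteEdges (bd G X)).Adj y w := by
      rw [SimpleGraph.deleteEdges_adj]; exact ⟨hw.1, hnot⟩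
    have : w ∈ ({x, y} : Set V) := by rw [← hsupp]; exact supp_closed _ hys hadj'
    rcases this with h | h
    · exact hw.2 h
    · exact hadj'.ne' h
  -- such boundary edges have their other endpoint in X
  have hendX : ∀ p w : V, p ∉ X → s(p, w) ∈ bd G X → w ∈ X := by
    intro p w hp hmem
    obtain ⟨p', q', hpq, hp', hq', heq⟩ := mem_bd.mp hmem
    rw [Sym2.eq_iff] at heq
    rcases heq with ⟨rfl, rfl⟩ | ⟨rfl, rfl⟩
    · exact absurd hp' hp
    · exact hp'
  have hu₁X : u₁ ∈ X := hendX x u₁ hxX (keyx u₁ hu₁)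
  have hu₂X : u₂ ∈ X := hendX x u₂ hxX (keyx u₂ hu₂)
  have hv₁X : v₁ ∈ X := hendX y v₁ hyX (keyy v₁ hv₁)
  have hv₂X : v₂ ∈ X := hendX y v₂ hyX (keyy v₂ hv₂)
  -- the four boundary edges exhaust bd G X
  have hxu₁ : x ≠ u₁ := fun h => G.irrefl (h ▸ hu₁.1)
  have hxu₂ : x ≠ u₂ := fun h => G.irrefl (h ▸ hu₂.1)
  have hyv₁ : y ≠ v₁ := fun h => G.irrefl (h ▸ hv₁.1)
  have hyv₂ : y ≠ v₂ := fun h => G.irrefl (h ▸ hv₂.1)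
  have hxv₁ : x ≠ v₁ := fun h => hxX (h ▸ hv₁X)
  have hxv₂ : x ≠ v₂ := fun h => hxX (h ▸ hv₂X)
  have hyu₁ : y ≠ u₁ := fun h => hyX (h ▸ hu₁X)
  have hyu₂ : y ≠ u₂ := fun h => hyX (h ▸ hu₂X)
  have hE4sub : ({s(x, u₁), s(x, u₂), s(y, v₁), s(y, v₂)} : Set (Sym2 V)) ⊆ bd G X := by
    rintro e (rfl | rfl | rfl | rfl)
    · exact keyx u₁ hu₁
    · exact keyx u₂ hu₂
    · exact keyy v₁ hv₁
    · exact keyy v₂ hv₂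
  have hE4card : ({s(x, u₁), s(x, u₂), s(y, v₁), s(y, v₂)} : Set (Sym2 V)).ncard = 4 := by
    rw [Set.ncard_insert_of_notMem (by simp [Sym2.eq_iff]; tauto) (Set.toFinite _),
        Set.ncard_insert_of_notMem (by simp [Sym2.eq_iff]; tauto) (Set.toFinite _),
        Set.ncard_pair (by simp [Sym2.eq_iff]; tauto)]
  have hE4eq : ({s(x, u₁), s(x, u₂), s(y, v₁), s(y, v₂)} : Set (Sym2 V)) = bd G X :=
    Set.eq_of_subset_of_ncard_le hE4sub (by rw [hE4card, hbdcard]) (Set.toFinite _)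
  -- neighborhoods of x and y
  have hNx : G.neighborSet x = {y, u₁, u₂} := by
    refine (Set.eq_of_subset_of_ncard_le ?_ ?_ (Set.toFinite _)).symm
    · rintro w (rfl | rfl | rfl)
      · exact hGxy
      · exact hu₁.1
      · exact hu₂.1
    · rw [hdeg]
      rw [Set.ncard_insert_of_notMem (by simp [hyu₁, hyu₂]) (Set.toFinite _),
          Set.ncard_pair hu12]
  have hNy : G.neighborSet y = {x, v₁, v₂} := by
    refine (Set.eq_of_subset_of_ncard_le ?_ ?_ (Set.toFinite _)).symm
    · rintro w (rfl | rfl | rfl)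
      · exact hGxy.symm
      · exact hv₁.1
      · exact hv₂.1
    · rw [hdeg]
      rw [Set.ncard_insert_of_notMem (by simp [hxv₁, hxv₂]) (Set.toFinite _),
          Set.ncard_pair hv12]
  -- S = X ∪ {x, y} is adjacency-closed
  set S : Set V := X ∪ {x, y} with hSdef
  have hclosed : ∀ ⦃p w : V⦄, p ∈ S → G.Adj p w → w ∈ S := by
    rintro p w (hp | hp) hadj
    · by_cases hw : w ∈ X
      · exact Or.inl hw
      · have hmem : s(p, w) ∈ bd G X := mem_bd.mpr ⟨p, w, hadj, hp, hw, rfl⟩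
        rw [← hE4eq] at hmem
        refine Or.inr ?_
        simp only [Set.mem_insert_iff, Set.mem_singleton_iff, Sym2.eq_iff] at hmem
        rcases hmem with (⟨rfl, rfl⟩ | ⟨rfl, rfl⟩) | (⟨rfl, rfl⟩ | ⟨rfl, rfl⟩) |
          (⟨rfl, rfl⟩ | ⟨rfl, rfl⟩) | (⟨rfl, rfl⟩ | ⟨rfl, rfl⟩)
        · exact absurd hp hxX
        · exact Set.mem_insert _ _
        · exact absurd hp hxX
        · exact Set.mem_insert _ _
        · exact absurd hp hyX
        · simp
        · exact absurd hp hyX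
        · simp
    · rcases hp with rfl | rfl
      · have : w ∈ G.neighborSet p := hadj
        rw [hNx] at this
        rcases this with rfl | rfl | rfl
        · exact Or.inr (by simp)
        · exact Or.inl hu₁X
        · exact Or.inl hu₂X
      · have : w ∈ G.neighborSet p := hadj
        rw [hNy] at this
        rcases this with rfl | rfl | rfl
        · exact Or.inr (Set.mem_insert _ _)
        · exact Or.inl hv₁X
        · exact Or.inl hv₂X
  have hall : ∀ v, v ∈ S := univ_subset_closed hconn hclosed (Or.inl haX)
  have huniv : (Set.univ : Set V).ncard ≤ S.ncard :=
    Set.ncard_le_ncard (fun v _ => hall v) (Set.toFinite _)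
  rw [Set.ncard_univ, Nat.card_eq_fintype_card] at huniv
  have hS6 : S.ncard ≤ 6 := by
    have h1 := Set.ncard_union_le X ({x, y} : Set V)
    have h2 : ({x, y} : Set V).ncard = 2 := Set.ncard_pair hxy
    rw [hSdef]
    omega
  omega

private lemma not_card_8 [Fintype V] {G : SimpleGraph V} (hcard : Fintype.card V = 8)
    (hreg : ∀ v, degN G v = 3)
    (htri : ∀ x y z : V, G.Adj x y → G.Adj y z → G.Adj x z → False)
    (hc4 : ∀ a b c d : V, a ≠ c → b ≠ d →
      G.Adj a b → G.Adj b c → G.Adj c d → G.Adj d a → False) :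
    False := by
  have hdeg : ∀ v, (G.neighborSet v).ncard = 3 := fun v => hreg v
  have : Nonempty V := Fintype.card_pos_iff.mp (by omega)
  obtain ⟨v⟩ := this
  obtain ⟨a, b, c, hab, hac, hbc, hN⟩ := Set.ncard_eq_three.mp (hdeg v)
  have hva : G.Adj v a := (SimpleGraph.mem_neighborSet G v a).mp (by rw [hN]; simp)
  have hvb : G.Adj v b := (SimpleGraph.mem_neighborSet G v b).mp (by rw [hN]; simp)
  have hvc : G.Adj v c := (SimpleGraph.mem_neighborSet G v c).mp (by rw [hN]; simp)
  have hsecond : ∀ p, G.Adj v p → (G.neighborSet p \ {v}).ncard = 2 := by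
    intro p hvp
    rw [Set.ncard_diff_singleton_of_mem
      ((SimpleGraph.mem_neighborSet G p v).mpr hvp.symm), hdeg p]
  have hdisj2 : ∀ p q, G.Adj v p → G.Adj v q → p ≠ q →
      Disjoint (G.neighborSet p \ {v}) (G.neighborSet q \ {v}) := by
    intro p q hvp hvq hpq
    rw [Set.disjoint_left]
    rintro w ⟨hwp, hwv⟩ ⟨hwq, _⟩
    have hwv' : w ≠ v := hwv
    exact hc4 v p w q (Ne.symm hwv') hpq hvp
      ((SimpleGraph.mem_neighborSet G p w).mp hwp)
      ((SimpleGraph.mem_neighborSet G q w).mp hwq).symm hvq.symm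
  have hnotin : ∀ p w, G.Adj v p → w ∈ G.neighborSet p \ {v} → w ∉ ({v, a, b, c} : Set V) := by
    rintro p w hvp ⟨hwp, hwv⟩ (rfl | rfl | rfl | rfl)
    · exact hwv rfl
    · exact htri v p w hvp ((SimpleGraph.mem_neighborSet G p w).mp hwp) hva
    · exact htri v p w hvp ((SimpleGraph.mem_neighborSet G p w).mp hwp) hvb
    · exact htri v p w hvp ((SimpleGraph.mem_neighborSet G p w).mp hwp) hvc
  -- assemble the ten vertices
  have n1 : ({v, a, b, c} : Set V).ncard = 4 := by
    rw [Set.ncard_insert_of_notMem (by simp [hva.ne, hvb.ne, hvc.ne]) (Set.toFinite _),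
        Set.ncard_insert_of_notMem (by simp [hab, hac]) (Set.toFinite _),
        Set.ncard_pair hbc]
  have hBC : ((G.neighborSet b \ {v}) ∪ (G.neighborSet c \ {v})).ncard = 4 := by
    rw [Set.ncard_union_eq (hdisj2 b c hvb hvc hbc) (Set.toFinite _) (Set.toFinite _),
        hsecond b hvb, hsecond c hvc]
  have hABC : ((G.neighborSet a \ {v}) ∪
      ((G.neighborSet b \ {v}) ∪ (G.neighborSet c \ {v}))).ncard = 6 := by
    rw [Set.ncard_union_eq (Set.disjoint_union_right.mpr
        ⟨hdisj2 a b hva hvb hab, hdisj2 a c hva hvc hac⟩) (Set.toFinite _) (Set.toFinite _),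
        hsecond a hva, hBC]
  have hT : (({v, a, b, c} : Set V) ∪ ((G.neighborSet a \ {v}) ∪
      ((G.neighborSet b \ {v}) ∪ (G.neighborSet c \ {v})))).ncard = 10 := by
    rw [Set.ncard_union_eq ?_ (Set.toFinite _) (Set.toFinite _), n1, hABC]
    rw [Set.disjoint_left]
    rintro w hwB (hw | hw | hw)
    · exact hnotin a w hva hw hwB
    · exact hnotin b w hvb hw hwB
    · exact hnotin c w hvc hw hwB
  have hle : (({v, a, b, c} : Set V) ∪ ((G.neighborSet a \ {v}) ∪
      ((G.neighborSet b \ {v}) ∪ (G.neighborSet c \ {v})))).ncard ≤ (Set.univ : Set V).ncard :=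
    Set.ncard_le_ncard (Set.subset_univ _) (Set.toFinite _)
  rw [hT, Set.ncard_univ, Nat.card_eq_fintype_card, hcard] at hle
  omega

/-- A 3-regular super-`λ'` graph of order `2n` with `n ≥ 4` has girth greater than `4`
and `n ≠ 4`. -/
theorem stmt7 {V : Type*} [Fintype V] (G : SimpleGraph V) (n : ℕ) (hn : 4 ≤ n)
    (hcard : Fintype.card V = 2 * n) (hreg : ∀ v, degN G v = 3)
    (hs : SuperLambda G 1) :
    (4 : ℕ∞) < G.egirth ∧ n ≠ 4 := by
  have htri := no_triangle hn hcard hreg hs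
  have hc4 : ∀ a b c d : V, a ≠ c → b ≠ d →
      G.Adj a b → G.Adj b c → G.Adj c d → G.Adj d a → False :=
    fun a b c d hac hbd hab hbc hcd hda =>
      no_c4 hn hcard hreg hs htri hac hbd hab hbc hcd hda
  constructor
  · have h5 : (5 : ℕ∞) ≤ G.egirth := by
      rw [SimpleGraph.le_egirth]
      intro u w hw
      by_contra hlt
      push_neg at hlt
      have hlen : w.length < 5 := by exact_mod_cast hlt
      have h3 := hw.three_le_length
      cases w with
      | nil => simp at h3
      | cons h1 p =>
        cases p with
        | nil => simp at h3
        | cons h2 q =>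
          cases q with
          | nil => simp at h3
          | cons h3' r =>
            cases r with
            | nil => exact htri _ _ _ h1 h2 h3'.symm
            | cons h4 s =>
              cases s with
              | nil =>
                have hnd := hw.support_nodup
                simp [SimpleGraph.Walk.support_cons] at hnd
                exact hc4 _ _ _ _ (by tauto) (by tauto) h1 h2 h3' h4
              | cons h5 t =>
                simp [SimpleGraph.Walk.length_cons] at hlen
                omega
    calc (4 : ℕ∞) < 5 := by norm_num
      _ ≤ _ := h5
  · intro h4
    rw [h4] at hcard
    exact not_card_8 (by omega) hreg htri hc4
end

section
/- Let G be a k-regular finite simple connected graph with k ≥ 4 that is λ''-connected and λ''-optimal. Then G is super-λ' if and only if the girth of G is at least 4 or k ≥ 5. -/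
open SimpleGraph

variable {V : Type*}

namespace AuxEC

def cutE (G : SimpleGraph V) (X : Set V) : Set (Sym2 V) :=
  {e ∈ G.edgeSet | ∃ x ∈ X, ∃ y ∈ Xᶜ, e = s(x, y)}

lemma dOut_eq (G : SimpleGraph V) (X : Set V) : dOut G X = (cutE G X).ncard := rfl

lemma mem_cutE {G : SimpleGraph V} {X : Set V} {e : Sym2 V} :
    e ∈ cutE G X ↔ ∃ x y, x ∈ X ∧ y ∉ X ∧ G.Adj x y ∧ e = s(x, y) := by
  constructor
  · rintro ⟨he, x, hx, y, hy, rfl⟩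
    exact ⟨x, y, hx, hy, G.mem_edgeSet.mp he, rfl⟩
  · rintro ⟨x, y, hx, hy, hadj, rfl⟩
    exact ⟨G.mem_edgeSet.mpr hadj, x, hx, y, hy, rfl⟩

lemma cutE_subset_edgeSet (G : SimpleGraph V) (X : Set V) : cutE G X ⊆ G.edgeSet :=
  fun _ he => he.1

/-- the edges from `v` leaving `X` -/
def nOut (G : SimpleGraph V) (X : Set V) (v : V) : Set (Sym2 V) :=
  (fun z => s(v, z)) '' (G.neighborSet v \ X)

lemma ncard_nOut (G : SimpleGraph V) (X : Set V) (v : V) :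
    (nOut G X v).ncard = (G.neighborSet v \ X).ncard :=
  Set.ncard_image_of_injective _ (fun _ _ h => Sym2.congr_right.mp h)

lemma disj_nOut {G : SimpleGraph V} {X : Set V} {u v : V} (hu : u ∈ X) (huv : u ≠ v) :
    Disjoint (nOut G X u) (nOut G X v) := by
  rw [Set.disjoint_left]
  rintro e ⟨z, ⟨hz1, hz2⟩, rfl⟩ ⟨w, ⟨hw1, hw2⟩, h⟩
  rw [Sym2.eq_iff] at h
  rcases h with ⟨h1, _⟩ | ⟨h1, h2⟩
  · exact huv h1.symm
  · exact hw2 (by rw [h2]; exact hu)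

lemma mem_nOut {G : SimpleGraph V} {X : Set V} {v : V} {e : Sym2 V} :
    e ∈ nOut G X v ↔ ∃ z, G.Adj v z ∧ z ∉ X ∧ e = s(v, z) := by
  constructor
  · rintro ⟨z, ⟨hz1, hz2⟩, rfl⟩; exact ⟨z, hz1, hz2, rfl⟩
  · rintro ⟨z, h1, h2, rfl⟩; exact ⟨z, ⟨h1, h2⟩, rfl⟩

lemma cutE_pair {G : SimpleGraph V} {x y : V} (hxy : x ≠ y) :
    cutE G {x, y} = nOut G {x, y} x ∪ nOut G {x, y} y := by
  ext e
  simp only [Set.mem_union, mem_cutE, mem_nOut]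
  constructor
  · rintro ⟨a, b, ha, hb, hadj, rfl⟩
    rcases ha with rfl | rfl
    · exact Or.inl ⟨b, hadj, hb, rfl⟩
    · exact Or.inr ⟨b, hadj, hb, rfl⟩
  · rintro (⟨z, h1, h2, rfl⟩ | ⟨z, h1, h2, rfl⟩)
    · exact ⟨x, z, Or.inl rfl, h2, h1, rfl⟩
    · exact ⟨y, z, Or.inr rfl, h2, h1, rfl⟩

lemma cutE_triple {G : SimpleGraph V} {a b c : V} :
    cutE G {a, b, c} = nOut G {a, b, c} a ∪ (nOut G {a, b, c} b ∪ nOut G {a, b, c} c) := by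
  ext e
  simp only [Set.mem_union, mem_cutE, mem_nOut]
  constructor
  · rintro ⟨u, w, hu, hw, hadj, rfl⟩
    rcases hu with rfl | rfl | rfl
    · exact Or.inl ⟨w, hadj, hw, rfl⟩
    · exact Or.inr (Or.inl ⟨w, hadj, hw, rfl⟩)
    · exact Or.inr (Or.inr ⟨w, hadj, hw, rfl⟩)
  · rintro (⟨z, h1, h2, rfl⟩ | ⟨z, h1, h2, rfl⟩ | ⟨z, h1, h2, rfl⟩)
    · exact ⟨a, z, by simp, h2, h1, rfl⟩
    · exact ⟨b, z, by simp, h2, h1, rfl⟩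
    · exact ⟨c, z, by simp, h2, h1, rfl⟩


variable [Fintype V] {G : SimpleGraph V}

lemma ncard_inter_le {X : Set V} {v : V} {n : ℕ} (h : (X \ {v}).ncard ≤ n) :
    (G.neighborSet v ∩ X).ncard ≤ n := by
  refine le_trans (Set.ncard_le_ncard ?_ (Set.toFinite _)) h
  rintro z ⟨hz1, hz2⟩
  exact ⟨hz2, fun h => G.irrefl (h ▸ hz1)⟩

lemma ncard_diff_formula (X : Set V) (v : V) :
    (G.neighborSet v \ X).ncard = degN G v - (G.neighborSet v ∩ X).ncard := by
  have := Set.ncard_inter_add_ncard_diff_eq_ncard (G.neighborSet v) X (Set.toFinite _)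
  unfold degN
  omega

lemma inter_pair_eq {x y : V} (hxy : G.Adj x y) :
    G.neighborSet x ∩ {x, y} = {y} := by
  ext z
  simp only [Set.mem_inter_iff, mem_neighborSet, Set.mem_insert_iff, Set.mem_singleton_iff]
  constructor
  · rintro ⟨h1, rfl | rfl⟩
    · exact absurd h1 (G.irrefl)
    · rfl
  · rintro rfl; exact ⟨hxy, Or.inr rfl⟩

lemma inter_tri_eq {a b c : V} (hab : G.Adj a b) (hac : G.Adj a c) (hbc : b ≠ c) :
    G.neighborSet a ∩ {a, b, c} = {b, c} := by
  ext z
  simp only [Set.mem_inter_iff, mem_neighborSet, Set.mem_insert_iff, Set.mem_singleton_iff]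
  constructor
  · rintro ⟨h1, rfl | h⟩
    · exact absurd h1 (G.irrefl)
    · exact h
  · rintro (rfl | rfl)
    · exact ⟨hab, Or.inr (Or.inl rfl)⟩
    · exact ⟨hac, Or.inr (Or.inr rfl)⟩

lemma dOut_pair {x y : V} (hxy : G.Adj x y) :
    dOut G {x, y} = (degN G x - 1) + (degN G y - 1) := by
  rw [dOut_eq, cutE_pair hxy.ne,
    Set.ncard_union_eq (disj_nOut (by simp) hxy.ne) (Set.toFinite _) (Set.toFinite _),
    ncard_nOut, ncard_nOut, ncard_diff_formula, ncard_diff_formula,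
    inter_pair_eq hxy, Set.pair_comm x y, inter_pair_eq hxy.symm]
  simp

lemma dOut_triple_sum {a b c : V} (hab : a ≠ b) (hac : a ≠ c) (hbc : b ≠ c) :
    dOut G {a, b, c} =
      (G.neighborSet a \ {a, b, c}).ncard + (G.neighborSet b \ {a, b, c}).ncard
        + (G.neighborSet c \ {a, b, c}).ncard := by
  rw [dOut_eq, cutE_triple,
    Set.ncard_union_eq ?_ (Set.toFinite _) (Set.toFinite _),
    Set.ncard_union_eq (disj_nOut (by simp) hbc) (Set.toFinite _) (Set.toFinite _),
    ncard_nOut, ncard_nOut, ncard_nOut]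
  · ring
  · exact Disjoint.union_right (disj_nOut (by simp) hab) (disj_nOut (by simp) hac)

end AuxEC

namespace AuxEC
variable {G : SimpleGraph V}

lemma walk_closure {F : Set (Sym2 V)} {X : Set V}
    (hF : ∀ x y, x ∈ X → y ∉ X → G.Adj x y → s(x, y) ∈ F)
    {u w : V} (p : (G.deleteEdges F).Walk u w) (hu : u ∈ X) : w ∈ X := by
  induction p with
  | nil => exact hu
  | cons h p ih =>
      rw [deleteEdges_adj] at h
      refine ih ?_
      by_contra hb
      exact h.2 (hF _ _ hu hb h.1)

lemma cross_mem_F {F : Set (Sym2 V)} (c : (G.deleteEdges F).ConnectedComponent) :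
    cutE G c.supp ⊆ F := by
  intro e he
  rw [mem_cutE] at he
  obtain ⟨x, y, hx, hy, hadj, rfl⟩ := he
  by_contra hne
  have hadj' : (G.deleteEdges F).Adj x y := deleteEdges_adj.mpr ⟨hadj, hne⟩
  refine hy ?_
  rw [ConnectedComponent.mem_supp_iff] at hx ⊢
  rw [← hx]
  exact (ConnectedComponent.connectedComponentMk_eq_of_adj hadj').symm

lemma induce_connected_of_adj {X : Set V} (hne : X.Nonempty)
    (h : ∀ x ∈ X, ∀ y ∈ X, x ≠ y → G.Adj x y) : (G.induce X).Connected := by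
  rw [connected_iff]
  refine ⟨?_, ⟨⟨hne.choose, hne.choose_spec⟩⟩⟩
  rintro ⟨a, ha⟩ ⟨b, hb⟩
  rcases eq_or_ne a b with rfl | hab
  · rfl
  · exact Adj.reachable (h a ha b hb hab)

lemma supp_two_adj {F : Set (Sym2 V)} (c : (G.deleteEdges F).ConnectedComponent)
    (h2 : c.supp.ncard = 2) :
    ∃ x y : V, x ≠ y ∧ c.supp = {x, y} ∧ G.Adj x y ∧ (G.induce c.supp).Connected := by
  obtain ⟨x, y, hxy, hsupp⟩ := Set.ncard_eq_two.mp h2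
  have hx : x ∈ c.supp := by rw [hsupp]; simp
  have hy : y ∈ c.supp := by rw [hsupp]; simp
  rw [ConnectedComponent.mem_supp_iff] at hx hy
  have hreach : (G.deleteEdges F).Reachable x y := by
    rw [← ConnectedComponent.eq, hx, hy]
  obtain ⟨p⟩ := hreach
  have hnn : ¬ p.Nil := Walk.not_nil_of_ne hxy
  obtain ⟨u, hadj, q, rfl⟩ := Walk.not_nil_iff.mp hnn
  have hu : u ∈ c.supp := by
    rw [ConnectedComponent.mem_supp_iff, ← hx]
    exact (ConnectedComponent.connectedComponentMk_eq_of_adj hadj).symm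
  have hu' : u = y := by
    rw [hsupp] at hu
    simp only [Set.mem_insert_iff, Set.mem_singleton_iff] at hu
    rcases hu with rfl | rfl
    · exact absurd hadj ((G.deleteEdges F).irrefl)
    · rfl
  have hadjG : G.Adj x y := by
    rw [← hu']; exact (deleteEdges_adj.mp hadj).1
  refine ⟨x, y, hxy, hsupp, hadjG, ?_⟩
  rw [hsupp]
  exact induce_connected_of_adj ⟨x, by simp⟩ (by
    rintro a (rfl | rfl) b (rfl | rfl) hab
    · exact absurd rfl hab
    · exact hadjG
    · exact hadjG.symm
    · exact absurd rfl hab)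

end AuxEC

namespace AuxEC
variable [Fintype V] {G : SimpleGraph V}

lemma nonempty_nbr_diff {X : Set V} {v : V} {k : ℕ} (hk : 4 ≤ k) (hdeg : degN G v = k)
    (hX : (X \ {v}).ncard ≤ 2) : ((G.neighborSet v \ X)).Nonempty := by
  have h1 := ncard_diff_formula (G := G) X v
  have h2 := ncard_inter_le (G := G) hX
  have h3 : (G.neighborSet v \ X).ncard ≠ 0 := by omega
  rcases Set.eq_empty_or_nonempty (G.neighborSet v \ X) with he | hne
  · rw [he, Set.ncard_empty] at h3; omega
  · exact hne

lemma pair_diff_le {x y v : V} : (({x, y} : Set V) \ {v}).ncard ≤ 2 := by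
  refine le_trans (Set.ncard_le_ncard Set.diff_subset (Set.toFinite _)) ?_
  refine le_trans (Set.ncard_insert_le x {y}) ?_
  rw [Set.ncard_singleton]

lemma pair_cut_is_cut {k : ℕ} (hk : 4 ≤ k) (hreg : ∀ v, degN G v = k)
    {x y : V} (hxy : G.Adj x y) : IsExtraEdgeCut G 1 (cutE G {x, y}) := by
  set X : Set V := {x, y} with hX
  set F := cutE G X with hFdef
  have hxmem : x ∈ X := by simp [hX]
  have hymem : y ∈ X := by simp [hX]
  have hclosure : ∀ a b, a ∈ X → b ∉ X → G.Adj a b → s(a, b) ∈ F :=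
    fun a b ha hb hadj => mem_cutE.mpr ⟨a, b, ha, hb, hadj, rfl⟩
  have hxyF : s(x, y) ∉ F := by
    intro hmem
    rw [hFdef, mem_cutE] at hmem
    obtain ⟨a, b, ha, hb, -, he⟩ := hmem
    rw [Sym2.eq_iff] at he
    rcases he with ⟨h1, h2⟩ | ⟨h1, h2⟩
    · exact hb (by rw [← h2]; exact hymem)
    · exact hb (by rw [← h1]; exact hxmem)
  have hBout : ∀ v, v ∉ X → ∃ u, (G.deleteEdges F).Adj v u := by
    intro v hv
    obtain ⟨u, hu1, hu2⟩ := nonempty_nbr_diff hk (hreg v) (pair_diff_le (x := x) (y := y) (v := v))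
    refine ⟨u, deleteEdges_adj.mpr ⟨hu1, ?_⟩⟩
    intro hmem
    rw [hFdef, mem_cutE] at hmem
    obtain ⟨a, b, ha, hb, -, he⟩ := hmem
    rw [Sym2.eq_iff] at he
    rcases he with ⟨h1, h2⟩ | ⟨h1, h2⟩
    · exact hv (by rw [h1]; exact ha)
    · exact hu2 (by rw [h2]; exact ha)
  refine ⟨cutE_subset_edgeSet G X, ?_, ?_⟩
  · intro hC
    obtain ⟨z, hz1, hz2⟩ := nonempty_nbr_diff hk (hreg x) (pair_diff_le (x := x) (y := y) (v := x))
    obtain ⟨p⟩ := hC.preconnected x z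
    exact hz2 (walk_closure hclosure p hxmem)
  · intro c
    obtain ⟨v, hv0⟩ := c.exists_rep
    have hv : (G.deleteEdges F).connectedComponentMk v = c := hv0
    have hvu : ∃ u, u ≠ v ∧ (G.deleteEdges F).Adj v u := by
      by_cases hvX : v ∈ X
      · have : v = x ∨ v = y := by simpa [hX] using hvX
        rcases this with rfl | rfl
        · exact ⟨y, hxy.ne', deleteEdges_adj.mpr ⟨hxy, hxyF⟩⟩
        · refine ⟨x, hxy.ne, deleteEdges_adj.mpr ⟨hxy.symm, ?_⟩⟩
          rw [Sym2.eq_swap]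
          exact hxyF
      · obtain ⟨u, hu⟩ := hBout v hvX
        exact ⟨u, hu.ne', hu⟩
    obtain ⟨u, hune, hadj⟩ := hvu
    have husupp : u ∈ c.supp := by
      rw [ConnectedComponent.mem_supp_iff, ← hv]
      exact (ConnectedComponent.connectedComponentMk_eq_of_adj hadj).symm
    have hvsupp : v ∈ c.supp := by rw [ConnectedComponent.mem_supp_iff, hv]
    have hsub : ({v, u} : Set V) ⊆ c.supp := by
      intro w hw
      rcases hw with rfl | hw
      · exact hvsupp
      · rw [Set.mem_singleton_iff] at hw
        subst hw; exact husupp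
    calc 1 < ({v, u} : Set V).ncard := by rw [Set.ncard_pair (Ne.symm hune)]; norm_num
    _ ≤ c.supp.ncard := Set.ncard_le_ncard hsub (Set.toFinite _)

lemma lambdaH_le_ncard {h : ℕ} {F : Set (Sym2 V)} (hF : IsExtraEdgeCut G h F) :
    lambdaH G h ≤ F.ncard := Nat.sInf_le ⟨F, hF, rfl⟩

lemma lambdaH_attained {h : ℕ} (hl : LambdaConn G h) :
    ∃ F, IsExtraEdgeCut G h F ∧ F.ncard = lambdaH G h := by
  obtain ⟨F, hF⟩ := hl
  exact Nat.sInf_mem (⟨F.ncard, F, hF, rfl⟩ :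
    {k | ∃ F, IsExtraEdgeCut G h F ∧ F.ncard = k}.Nonempty)

lemma xiH_le_dOut {h : ℕ} {X : Set V} (h1 : X.ncard = h + 1) (h2 : (G.induce X).Connected) :
    xiH G h ≤ dOut G X := Nat.sInf_le ⟨X, h1, h2, rfl⟩

lemma xiH_attained {h : ℕ} (hne : xiH G h ≠ 0) :
    ∃ X : Set V, X.ncard = h + 1 ∧ (G.induce X).Connected ∧ dOut G X = xiH G h := by
  have hs : {k | ∃ X : Set V, X.ncard = h + 1 ∧ (G.induce X).Connected ∧ dOut G X = k}.Nonempty := by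
    by_contra hemp
    rw [Set.not_nonempty_iff_eq_empty] at hemp
    rw [xiH, hemp, Nat.sInf_empty] at hne
    exact hne rfl
  exact Nat.sInf_mem hs

lemma extra_mono {F : Set (Sym2 V)} (hF : IsExtraEdgeCut G 2 F) : IsExtraEdgeCut G 1 F :=
  ⟨hF.1, hF.2.1, fun c => lt_trans one_lt_two (hF.2.2 c)⟩

lemma lambda2_pos (hconn : G.Connected) (hl2 : LambdaConn G 2) : 1 ≤ lambdaH G 2 := by
  obtain ⟨F, hF, hn⟩ := lambdaH_attained hl2
  by_contra hcon
  have h0 : F.ncard = 0 := by omega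
  rw [Set.ncard_eq_zero (Set.toFinite _)] at h0
  subst h0
  exact hF.2.1 (by rw [deleteEdges_empty]; exact hconn)

end AuxEC

variable {G : SimpleGraph V}

lemma tri_not_egirth {a b c : V} (hab : G.Adj a b) (hbc : G.Adj b c)
    (hca : G.Adj c a) : ¬ (4:ℕ∞) ≤ G.egirth := by
  intro h4
  have hcyc : (Walk.cons hab (Walk.cons hbc (Walk.cons hca Walk.nil))).IsCycle := by
    have h1 : a ≠ b := hab.ne
    have h2 : b ≠ c := hbc.ne
    have h3 : c ≠ a := hca.ne
    simp [Walk.isCycle_def, Walk.isTrail_def, List.nodup_cons, Sym2.eq_iff, h1, h2, h3,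
      h1.symm, h2.symm, h3.symm]
  have := le_egirth.mp h4 a _ hcyc
  simp [Walk.length_cons] at this
  exact absurd this (by norm_num)

lemma exists_triangle_of_egirth_lt (h : G.egirth < 4) :
    ∃ a b c, G.Adj a b ∧ G.Adj b c ∧ G.Adj c a := by
  have hacyc : ¬ G.IsAcyclic := by
    intro hA
    rw [← egirth_eq_top] at hA
    rw [hA] at h
    simp at h
  obtain ⟨a, w, hc, hlen⟩ := exists_egirth_eq_length.mpr hacyc
  have h3 : 3 ≤ G.egirth := three_le_egirth
  rw [hlen] at h h3
  have h4' : w.length < 4 := by exact_mod_cast h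
  have h3' : 3 ≤ w.length := by exact_mod_cast h3
  have hlen3 : w.length = 3 := by omega
  clear h h3 hlen hc
  cases w with
  | nil => simp at hlen3
  | cons hab p =>
    cases p with
    | nil => simp at hlen3
    | cons hbc q =>
      cases q with
      | nil => simp at hlen3
      | cons hcd r =>
        cases r with
        | nil => exact ⟨_, _, _, hab, hbc, hcd⟩
        | cons h' r' => simp [Walk.length_cons] at hlen3

lemma pair_connected_adj {x y : V} (hxy : x ≠ y)
    (hc : (G.induce ({x, y} : Set V)).Connected) : G.Adj x y := by
  have hr := hc.preconnected ⟨x, by simp⟩ ⟨y, by simp⟩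
  obtain ⟨p⟩ := hr
  have hnn : ¬ p.Nil := Walk.not_nil_of_ne (fun h => hxy (congrArg Subtype.val h))
  obtain ⟨u, hadj, q, rfl⟩ := Walk.not_nil_iff.mp hnn
  have hadjG : G.Adj x u.val := hadj
  have hu : u.val = x ∨ u.val = y := by
    have h2 := u.2
    rw [Set.mem_insert_iff, Set.mem_singleton_iff] at h2
    exact h2
  rcases hu with h | h
  · rw [h] at hadjG; exact absurd hadjG (G.irrefl)
  · rwa [h] at hadjG

namespace AuxEC
variable [Fintype V] {G : SimpleGraph V}

lemma ncard_pair_le (b c : V) : ({b, c} : Set V).ncard ≤ 2 :=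
  le_trans (Set.ncard_insert_le b {c}) (by rw [Set.ncard_singleton])

lemma triple_comm_b (a b c : V) : ({a, b, c} : Set V) = {b, a, c} := Set.insert_comm a b {c}

lemma triple_comm_c (a b c : V) : ({a, b, c} : Set V) = {c, a, b} := by
  ext z; simp only [Set.mem_insert_iff, Set.mem_singleton_iff]; tauto

lemma triple_diff_le {a b c : V} : (({a, b, c} : Set V) \ {a}).ncard ≤ 2 := by
  refine le_trans (Set.ncard_le_ncard (t := ({b, c} : Set V)) ?_ (Set.toFinite _))
    (ncard_pair_le b c)
  rintro z ⟨hz1, hz2⟩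
  rcases hz1 with rfl | hz1
  · exact absurd (Set.mem_singleton _) hz2
  · exact hz1

lemma inter_ncard_le_one {v t : V} {X : Set V} (h : ∀ z ∈ X, G.Adj v z → z = t) :
    (G.neighborSet v ∩ X).ncard ≤ 1 := by
  refine le_trans (Set.ncard_le_ncard ?_ (Set.toFinite _))
    (le_of_eq (Set.ncard_singleton t))
  rintro z ⟨hz1, hz2⟩
  exact h z hz2 hz1

lemma m_le_two_a {a b c : V} : (G.neighborSet a ∩ ({a, b, c} : Set V)).ncard ≤ 2 :=
  ncard_inter_le triple_diff_le

lemma m_le_two_b {a b c : V} : (G.neighborSet b ∩ ({a, b, c} : Set V)).ncard ≤ 2 := by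
  rw [triple_comm_b]; exact ncard_inter_le triple_diff_le

lemma m_le_two_c {a b c : V} : (G.neighborSet c ∩ ({a, b, c} : Set V)).ncard ≤ 2 := by
  rw [triple_comm_c]; exact ncard_inter_le triple_diff_le

lemma dOut_triple_ge {k : ℕ} (hk : 4 ≤ k) (hreg : ∀ v, degN G v = k)
    {a b c : V} (hab : a ≠ b) (hac : a ≠ c) (hbc : b ≠ c) :
    3 * k - 6 ≤ dOut G {a, b, c} := by
  rw [dOut_triple_sum hab hac hbc,
    ncard_diff_formula, ncard_diff_formula, ncard_diff_formula, hreg, hreg, hreg]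
  have h1 := m_le_two_a (G := G) (a := a) (b := b) (c := c)
  have h2 := m_le_two_b (G := G) (a := a) (b := b) (c := c)
  have h3 := m_le_two_c (G := G) (a := a) (b := b) (c := c)
  omega

lemma dOut_triple_ge' {k : ℕ} (hk : 4 ≤ k) (hreg : ∀ v, degN G v = k)
    {a b c : V} (hab : a ≠ b) (hac : a ≠ c) (hbc : b ≠ c)
    (hnt : ¬(G.Adj a b ∧ G.Adj b c ∧ G.Adj c a)) :
    3 * k - 4 ≤ dOut G {a, b, c} := by
  rw [dOut_triple_sum hab hac hbc,
    ncard_diff_formula, ncard_diff_formula, ncard_diff_formula, hreg, hreg, hreg]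
  have h1 := m_le_two_a (G := G) (a := a) (b := b) (c := c)
  have h2 := m_le_two_b (G := G) (a := a) (b := b) (c := c)
  have h3 := m_le_two_c (G := G) (a := a) (b := b) (c := c)
  by_cases e1 : G.Adj a b
  · by_cases e2 : G.Adj b c
    · have e3 : ¬ G.Adj c a := fun h => hnt ⟨e1, e2, h⟩
      have q1 : (G.neighborSet c ∩ ({a, b, c} : Set V)).ncard ≤ 1 := by
        refine inter_ncard_le_one (t := b) ?_
        rintro z (rfl | rfl | rfl) hadj
        · exact absurd hadj e3
        · rfl
        · exact absurd hadj (G.irrefl)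
      have q2 : (G.neighborSet a ∩ ({a, b, c} : Set V)).ncard ≤ 1 := by
        refine inter_ncard_le_one (t := b) ?_
        rintro z (rfl | rfl | rfl) hadj
        · exact absurd hadj (G.irrefl)
        · rfl
        · exact absurd hadj.symm e3
      omega
    · have q1 : (G.neighborSet b ∩ ({a, b, c} : Set V)).ncard ≤ 1 := by
        refine inter_ncard_le_one (t := a) ?_
        rintro z (rfl | rfl | rfl) hadj
        · rfl
        · exact absurd hadj (G.irrefl)
        · exact absurd hadj e2
      have q2 : (G.neighborSet c ∩ ({a, b, c} : Set V)).ncard ≤ 1 := by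
        refine inter_ncard_le_one (t := a) ?_
        rintro z (rfl | rfl | rfl) hadj
        · rfl
        · exact absurd hadj.symm e2
        · exact absurd hadj (G.irrefl)
      omega
  · have q1 : (G.neighborSet a ∩ ({a, b, c} : Set V)).ncard ≤ 1 := by
      refine inter_ncard_le_one (t := c) ?_
      rintro z (rfl | rfl | rfl) hadj
      · exact absurd hadj (G.irrefl)
      · exact absurd hadj e1
      · rfl
    have q2 : (G.neighborSet b ∩ ({a, b, c} : Set V)).ncard ≤ 1 := by
      refine inter_ncard_le_one (t := c) ?_
      rintro z (rfl | rfl | rfl) hadj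
      · exact absurd hadj.symm e1
      · exact absurd hadj (G.irrefl)
      · rfl
    omega

lemma dOut_triangle {k : ℕ} (hk : 4 ≤ k) (hreg : ∀ v, degN G v = k)
    {a b c : V} (hab : G.Adj a b) (hbc : G.Adj b c) (hca : G.Adj c a) :
    dOut G {a, b, c} = 3 * k - 6 := by
  have hab' : a ≠ b := hab.ne
  have hac' : a ≠ c := hca.ne'
  have hbc' : b ≠ c := hbc.ne
  rw [dOut_triple_sum hab' hac' hbc',
    ncard_diff_formula, ncard_diff_formula, ncard_diff_formula, hreg, hreg, hreg]
  have m1 : (G.neighborSet a ∩ ({a, b, c} : Set V)).ncard = 2 := by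
    rw [inter_tri_eq hab hca.symm hbc', Set.ncard_pair hbc']
  have m2 : (G.neighborSet b ∩ ({a, b, c} : Set V)).ncard = 2 := by
    rw [triple_comm_b, inter_tri_eq hab.symm hbc hac', Set.ncard_pair hac']
  have m3 : (G.neighborSet c ∩ ({a, b, c} : Set V)).ncard = 2 := by
    rw [triple_comm_c, inter_tri_eq hca hbc.symm hab', Set.ncard_pair hab']
  omega

end AuxEC


/-- A `k`-regular `λ''`-optimal graph with `k ≥ 4` is super-`λ'` iff its girth is at
least `4` or `k ≥ 5`. -/
theorem stmt10 {V : Type*} [Fintype V] (G : SimpleGraph V) (k : ℕ) (hk : 4 ≤ k)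
    (hconn : G.Connected) (hreg : ∀ v, degN G v = k)
    (hl2 : LambdaConn G 2) (hopt : lambdaH G 2 = xiH G 2) :
    SuperLambda G 1 ↔ ((4 : ℕ∞) ≤ G.egirth ∨ 5 ≤ k) := by
  classical
  have hV : Nonempty V := hconn.nonempty
  obtain ⟨v₀⟩ := hV
  have hy0 : ∃ y, G.Adj v₀ y := by
    rcases Set.eq_empty_or_nonempty (G.neighborSet v₀) with he | ⟨y, hy⟩
    · have hd := hreg v₀
      rw [degN, he, Set.ncard_empty] at hd
      omega
    · exact ⟨y, hy⟩
  obtain ⟨y₀, hy₀⟩ := hy0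
  -- ξ₁ = 2k-2
  have hxi1 : xiH G 1 = 2 * k - 2 := by
    have hne : {n | ∃ X : Set V, X.ncard = 1 + 1 ∧ (G.induce X).Connected ∧
        dOut G X = n}.Nonempty := by
      refine ⟨dOut G {v₀, y₀}, {v₀, y₀}, by rw [Set.ncard_pair hy₀.ne], ?_, rfl⟩
      refine AuxEC.induce_connected_of_adj ⟨v₀, by simp⟩ ?_
      rintro x (rfl | rfl) y (rfl | rfl) hxy
      · exact absurd rfl hxy
      · exact hy₀
      · exact hy₀.symm
      · exact absurd rfl hxy
    have hmem : ∃ X : Set V, X.ncard = 1 + 1 ∧ (G.induce X).Connected ∧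
        dOut G X = xiH G 1 := Nat.sInf_mem hne
    obtain ⟨X, hX2, hXc, hXd⟩ := hmem
    have hX2' : X.ncard = 2 := by omega
    obtain ⟨x, y, hxy, rfl⟩ := Set.ncard_eq_two.mp hX2'
    have hadjxy : G.Adj x y := pair_connected_adj hxy hXc
    rw [AuxEC.dOut_pair hadjxy, hreg, hreg] at hXd
    have hk1 : 1 ≤ k := by omega
    omega
  have hl1 : LambdaConn G 1 := by
    obtain ⟨F, hF⟩ := hl2
    exact ⟨F, AuxEC.extra_mono hF⟩
  have hl2pos : 1 ≤ lambdaH G 2 := AuxEC.lambda2_pos hconn hl2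
  have hllee : lambdaH G 1 ≤ lambdaH G 2 := by
    obtain ⟨F₂, hF₂, hn₂⟩ := AuxEC.lambdaH_attained hl2
    rw [← hn₂]
    exact AuxEC.lambdaH_le_ncard (AuxEC.extra_mono hF₂)
  have hxi2lb : 3 * k - 6 ≤ xiH G 2 := by
    have hpos : xiH G 2 ≠ 0 := by rw [← hopt]; omega
    obtain ⟨X, h3, hc, hd⟩ := AuxEC.xiH_attained hpos
    have h3' : X.ncard = 3 := by omega
    obtain ⟨a, b, c, hab, hac, hbc, rfl⟩ := Set.ncard_eq_three.mp h3'
    rw [← hd]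
    exact AuxEC.dOut_triple_ge hk hreg hab hac hbc
  constructor
  · rintro ⟨-, -, hopt1, hsuper⟩
    by_contra hcon
    push_neg at hcon
    obtain ⟨hg, hk5⟩ := hcon
    have hgl : G.egirth < 4 := hg
    obtain ⟨a, b, c, hab, hbc, hca⟩ := exists_triangle_of_egirth_lt hgl
    have htri := AuxEC.dOut_triangle hk hreg hab hbc hca
    have h3card : ({a, b, c} : Set V).ncard = 2 + 1 := by
      have : ({a, b, c} : Set V).ncard = 3 :=
        Set.ncard_eq_three.mpr ⟨a, b, c, hab.ne, hca.ne', hbc.ne, rfl⟩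
      omega
    have hconn3 : (G.induce ({a, b, c} : Set V)).Connected := by
      refine AuxEC.induce_connected_of_adj ⟨a, by simp⟩ ?_
      rintro x (rfl | rfl | rfl) y (rfl | rfl | rfl) hxy
      · exact absurd rfl hxy
      · exact hab
      · exact hca.symm
      · exact hab.symm
      · exact absurd rfl hxy
      · exact hbc
      · exact hca
      · exact hbc.symm
      · exact absurd rfl hxy
    have hxi2ub : xiH G 2 ≤ 3 * k - 6 := by
      have hle := AuxEC.xiH_le_dOut h3card hconn3
      omega
    obtain ⟨F₂, hF₂, hn₂⟩ := AuxEC.lambdaH_attained hl2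
    have hn₂' : F₂.ncard = lambdaH G 1 := by
      have e1 : lambdaH G 1 = 2 * k - 2 := by rw [hopt1, hxi1]
      have e2 : lambdaH G 2 ≤ 3 * k - 6 := by rw [hopt]; exact hxi2ub
      have hk4 : k = 4 := by omega
      omega
    obtain ⟨cc, hcc⟩ := hsuper F₂ (AuxEC.extra_mono hF₂) hn₂'
    have hgt := hF₂.2.2 cc
    omega
  · intro hgk
    obtain ⟨F₁, hF₁, hn₁⟩ := AuxEC.lambdaH_attained hl1
    have hxi1le : xiH G 1 ≤ lambdaH G 1 := by
      by_cases hex : ∃ cc : (G.deleteEdges F₁).ConnectedComponent, cc.supp.ncard = 2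
      · obtain ⟨cc, hcc⟩ := hex
        obtain ⟨x, y, hxy, hsupp, hadj, hind⟩ := AuxEC.supp_two_adj cc hcc
        have h1 : xiH G 1 ≤ dOut G cc.supp :=
          AuxEC.xiH_le_dOut (by rw [hsupp, Set.ncard_pair hxy]) hind
        have h2 : dOut G cc.supp ≤ F₁.ncard := by
          rw [AuxEC.dOut_eq]
          exact Set.ncard_le_ncard (AuxEC.cross_mem_F cc) (Set.toFinite _)
        omega
      · push_neg at hex
        have hF₁' : IsExtraEdgeCut G 2 F₁ :=
          ⟨hF₁.1, hF₁.2.1, fun cc => by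
            have g1 := hF₁.2.2 cc
            have g2 := hex cc
            omega⟩
        have hle2 : lambdaH G 2 ≤ lambdaH G 1 := by
          rw [← hn₁]; exact AuxEC.lambdaH_le_ncard hF₁'
        omega
    have hle : lambdaH G 1 ≤ xiH G 1 := by
      have hcut := AuxEC.pair_cut_is_cut hk hreg hy₀
      have h1 := AuxEC.lambdaH_le_ncard hcut
      have h2 : (AuxEC.cutE G {v₀, y₀}).ncard = dOut G {v₀, y₀} :=
        (AuxEC.dOut_eq G _).symm
      rw [AuxEC.dOut_pair hy₀, hreg, hreg] at h2
      omega
    have hopt1 : lambdaH G 1 = xiH G 1 := le_antisymm hle hxi1le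
    refine ⟨hconn, hl1, hopt1, ?_⟩
    intro F hF hnF
    by_contra hno
    push_neg at hno
    have hF2 : IsExtraEdgeCut G 2 F :=
      ⟨hF.1, hF.2.1, fun cc => by
        have g1 := hF.2.2 cc
        have g2 := hno cc
        omega⟩
    have h2le : lambdaH G 2 ≤ F.ncard := AuxEC.lambdaH_le_ncard hF2
    rcases hgk with hgirth | hk5
    · have hxi2lb' : 3 * k - 4 ≤ xiH G 2 := by
        have hpos : xiH G 2 ≠ 0 := by rw [← hopt]; omega
        obtain ⟨X, h3, hc, hd⟩ := AuxEC.xiH_attained hpos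
        have h3' : X.ncard = 3 := by omega
        obtain ⟨a, b, c, hab, hac, hbc, rfl⟩ := Set.ncard_eq_three.mp h3'
        rw [← hd]
        refine AuxEC.dOut_triple_ge' hk hreg hab hac hbc ?_
        rintro ⟨e1, e2, e3⟩
        exact tri_not_egirth e1 e2 e3 hgirth
      omega
    · omega
end

section
/- Let G be a k-regular finite simple connected graph with k ≥ 4 that is λ''-connected and λ''-optimal, and suppose the girth of G is at least 4. Then G is super-λ' and k − 2 ≤ ρ'(G) ≤ k − 1. -/
open SimpleGraph

variable {V : Type*}

/-! ### Auxiliary infrastructure -/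

section Infra

/-- The boundary edge set of `X`. -/
def bdry (H : SimpleGraph V) (X : Set V) : Set (Sym2 V) :=
  {e ∈ H.edgeSet | ∃ x ∈ X, ∃ y ∈ Xᶜ, e = s(x, y)}

lemma dOut_eq_ncard_bdry (H : SimpleGraph V) (X : Set V) : dOut H X = (bdry H X).ncard := rfl

lemma bdry_subset_edgeSet (H : SimpleGraph V) (X : Set V) : bdry H X ⊆ H.edgeSet :=
  fun _ h => h.1

lemma cross_of_walk {H : SimpleGraph V} {C : Set V} {u w : V}
    (p : H.Walk u w) (hw : w ∉ C) : u ∈ C → ∃ a b, a ∈ C ∧ b ∉ C ∧ H.Adj a b := by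
  induction p with
  | nil => exact fun hu => absurd hu hw
  | @cons u x w h p ih =>
    intro hu
    by_cases hx : x ∈ C
    · exact ih hw hx
    · exact ⟨u, x, hu, hx, h⟩

lemma cross_of_reachable {H : SimpleGraph V} {C : Set V} {u w : V}
    (h : H.Reachable u w) (hu : u ∈ C) (hw : w ∉ C) :
    ∃ a b, a ∈ C ∧ b ∉ C ∧ H.Adj a b := by
  obtain ⟨p⟩ := h
  exact cross_of_walk p hw hu

lemma exists_adj_of_reachable {H : SimpleGraph V} {u w : V}
    (h : H.Reachable u w) (hne : u ≠ w) : ∃ a, H.Adj u a := by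
  obtain ⟨a, b, ha, hb, hab⟩ := cross_of_reachable (C := {u}) h rfl
    (by simpa using hne.symm)
  rw [Set.mem_singleton_iff] at ha
  exact ⟨b, ha ▸ hab⟩

lemma mem_supp_of_adj {H : SimpleGraph V} {c : H.ConnectedComponent} {v w : V}
    (hv : v ∈ c.supp) (h : H.Adj v w) : w ∈ c.supp := by
  rw [ConnectedComponent.mem_supp_iff] at hv ⊢
  rw [← hv]
  exact ConnectedComponent.sound h.symm.reachable

lemma supp_nonempty {H : SimpleGraph V} (c : H.ConnectedComponent) : c.supp.Nonempty := by
  obtain ⟨v, hv⟩ := c.exists_rep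
  exact ⟨v, hv⟩

lemma adj_of_supp_pair {H : SimpleGraph V} {c : H.ConnectedComponent} {x y : V}
    (hs : c.supp = {x, y}) (hxy : x ≠ y) : H.Adj x y := by
  have hx : x ∈ c.supp := by rw [hs]; exact Set.mem_insert _ _
  have hy : y ∈ c.supp := by rw [hs]; exact Set.mem_insert_of_mem _ rfl
  have hx' := hx
  rw [ConnectedComponent.mem_supp_iff] at hx' hy
  have hr : H.Reachable x y := ConnectedComponent.exact (hx'.trans hy.symm)
  obtain ⟨a, ha⟩ := exists_adj_of_reachable hr hxy
  have : a ∈ c.supp := mem_supp_of_adj hx ha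
  rw [hs] at this
  rcases this with rfl | rfl
  · exact absurd rfl ha.ne
  · exact ha

lemma triangle_free {G : SimpleGraph V} (hg : (4 : ℕ∞) ≤ G.egirth) {x y z : V}
    (hxy : G.Adj x y) (hyz : G.Adj y z) (hxz : G.Adj x z) : False := by
  have hne1 : x ≠ y := hxy.ne
  have hne2 : y ≠ z := hyz.ne
  have hne3 : x ≠ z := hxz.ne
  set p : G.Walk y x := Walk.cons hyz (Walk.cons hxz.symm Walk.nil) with hp
  set w : G.Walk x x := Walk.cons hxy p with hw
  have hsup : p.support = [y, z, x] := by rw [hp]; simp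
  have hpath : p.IsPath := by
    apply Walk.IsPath.mk'
    rw [hsup]
    refine List.nodup_cons.mpr ⟨?_, List.nodup_cons.mpr ⟨?_, List.nodup_singleton x⟩⟩
    · intro hmem
      rcases List.mem_cons.mp hmem with rfl | hmem2
      · exact hne2 rfl
      · rcases List.mem_singleton.mp hmem2 with rfl
        exact hne1 rfl
    · intro hmem
      rcases List.mem_singleton.mp hmem with rfl
      exact hne3 rfl
  have hcyc : w.IsCycle := by
    rw [hw, Walk.cons_isCycle_iff]
    refine ⟨hpath, ?_⟩
    intro hmem
    have hedges : p.edges = [s(y, z), s(z, x)] := by rw [hp]; simp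
    rw [hedges] at hmem
    rcases List.mem_cons.mp hmem with h | hmem2
    · rcases Sym2.eq_iff.mp h with ⟨h1, _⟩ | ⟨h1, _⟩
      · exact hne1 h1
      · exact hne3 h1
    · rcases List.mem_singleton.mp hmem2 with h
      rcases Sym2.eq_iff.mp h with ⟨h1, _⟩ | ⟨_, h2⟩
      · exact hne3 h1
      · exact hne2 h2
  have hlen := le_egirth.mp hg x w hcyc
  have : w.length = 3 := by rw [hw, hp]; simp
  rw [this] at hlen
  norm_num at hlen

/-! ### Counting boundary edges -/

/-- The edges of the boundary of `X` leaving through a fixed vertex `a`. -/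
def bSet (H : SimpleGraph V) (X : Set V) (a : V) : Set (Sym2 V) :=
  (fun b => s(a, b)) '' (H.neighborSet a \ X)

lemma ncard_bSet (H : SimpleGraph V) (X : Set V) (a : V) :
    (bSet H X a).ncard = (H.neighborSet a \ X).ncard :=
  Set.ncard_image_of_injective _ (fun _ _ h => Sym2.congr_right.mp h)

lemma bSet_disjoint {H : SimpleGraph V} {X : Set V} {a b : V}
    (ha : a ∈ X) (hab : a ≠ b) : Disjoint (bSet H X a) (bSet H X b) := by
  rw [Set.disjoint_left]
  rintro e ⟨c, ⟨_, _⟩, rfl⟩ ⟨d, ⟨hd1, hd2⟩, he⟩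
  rcases Sym2.eq_iff.mp he.symm with ⟨h1, h2⟩ | ⟨h1, h2⟩
  · exact hab h1
  · exact hd2 (h1 ▸ ha)

lemma boundary_pair {H : SimpleGraph V} {x y : V} (hxy : H.Adj x y) :
    bdry H {x, y} = bSet H {x, y} x ∪ bSet H {x, y} y := by
  ext e
  constructor
  · rintro ⟨he, a, ha, b, hb, rfl⟩
    have hadj : H.Adj a b := (H.mem_edgeSet).mp he
    rcases ha with rfl | ha
    · exact Or.inl ⟨b, ⟨hadj, hb⟩, rfl⟩
    · rw [Set.mem_singleton_iff] at ha
      subst ha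
      exact Or.inr ⟨b, ⟨hadj, hb⟩, rfl⟩
  · rintro (⟨b, ⟨hb1, hb2⟩, rfl⟩ | ⟨b, ⟨hb1, hb2⟩, rfl⟩)
    · exact ⟨(H.mem_edgeSet).mpr hb1, x, Set.mem_insert _ _, b, hb2, rfl⟩
    · exact ⟨(H.mem_edgeSet).mpr hb1, y, Set.mem_insert_of_mem _ rfl, b, hb2, rfl⟩

lemma dOut_pair [Fintype V] {H : SimpleGraph V} {x y : V} (hxy : H.Adj x y) :
    dOut H {x, y} = degN H x + degN H y - 2 ∧ 2 ≤ degN H x + degN H y := by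
  have hx1 : 1 ≤ degN H x := by
    have : (H.neighborSet x).Nonempty := ⟨y, hxy⟩
    exact (Set.ncard_pos (Set.toFinite _)).mpr this
  have hy1 : 1 ≤ degN H y := by
    have : (H.neighborSet y).Nonempty := ⟨x, hxy.symm⟩
    exact (Set.ncard_pos (Set.toFinite _)).mpr this
  have hNx : H.neighborSet x \ {x, y} = H.neighborSet x \ {y} := by
    ext w; simp only [Set.mem_diff, Set.mem_insert_iff, Set.mem_singleton_iff]
    constructor
    · rintro ⟨hw, hw2⟩; exact ⟨hw, fun h => hw2 (Or.inr h)⟩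
    · rintro ⟨hw, hw2⟩
      refine ⟨hw, ?_⟩
      rintro (rfl | rfl)
      · exact H.irrefl hw
      · exact hw2 rfl
  have hNy : H.neighborSet y \ {x, y} = H.neighborSet y \ {x} := by
    ext w; simp only [Set.mem_diff, Set.mem_insert_iff, Set.mem_singleton_iff]
    constructor
    · rintro ⟨hw, hw2⟩; exact ⟨hw, fun h => hw2 (Or.inl h)⟩
    · rintro ⟨hw, hw2⟩
      refine ⟨hw, ?_⟩
      rintro (rfl | rfl)
      · exact hw2 rfl
      · exact H.irrefl hw
  have hcx : (H.neighborSet x \ ({x, y} : Set V)).ncard = degN H x - 1 := by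
    rw [hNx, Set.ncard_diff_singleton_of_mem (show y ∈ H.neighborSet x from hxy), degN]
  have hcy : (H.neighborSet y \ ({x, y} : Set V)).ncard = degN H y - 1 := by
    rw [hNy, Set.ncard_diff_singleton_of_mem (show x ∈ H.neighborSet y from hxy.symm), degN]
  have hdisj : Disjoint (bSet H {x, y} x) (bSet H {x, y} y) :=
    bSet_disjoint (Set.mem_insert _ _) hxy.ne
  have hval : dOut H {x, y} = (degN H x - 1) + (degN H y - 1) := by
    rw [dOut_eq_ncard_bdry, boundary_pair hxy,
      Set.ncard_union_eq hdisj (Set.toFinite _) (Set.toFinite _),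
      ncard_bSet, ncard_bSet, hcx, hcy]
  exact ⟨by omega, by omega⟩

lemma boundary_triple {H : SimpleGraph V} {x y z : V} :
    bdry H {x, y, z} = bSet H {x, y, z} x ∪ bSet H {x, y, z} y ∪ bSet H {x, y, z} z := by
  ext e
  constructor
  · rintro ⟨he, a, ha, b, hb, rfl⟩
    have hadj : H.Adj a b := (H.mem_edgeSet).mp he
    rcases ha with rfl | rfl | rfl
    · exact Or.inl (Or.inl ⟨b, ⟨hadj, hb⟩, rfl⟩)
    · exact Or.inl (Or.inr ⟨b, ⟨hadj, hb⟩, rfl⟩)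
    · exact Or.inr ⟨b, ⟨hadj, hb⟩, rfl⟩
  · rintro ((⟨b, ⟨hb1, hb2⟩, rfl⟩ | ⟨b, ⟨hb1, hb2⟩, rfl⟩) | ⟨b, ⟨hb1, hb2⟩, rfl⟩)
    · exact ⟨(H.mem_edgeSet).mpr hb1, x, by simp, b, hb2, rfl⟩
    · exact ⟨(H.mem_edgeSet).mpr hb1, y, by simp, b, hb2, rfl⟩
    · exact ⟨(H.mem_edgeSet).mpr hb1, z, by simp, b, hb2, rfl⟩

lemma dOut_triple [Fintype V] {G : SimpleGraph V} {k : ℕ} (hreg : ∀ v, degN G v = k)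
    (hk : 4 ≤ k) {x y z : V} (hxy : G.Adj x y) (hyz : G.Adj y z) (hxz : ¬G.Adj x z)
    (hxz' : x ≠ z) : dOut G {x, y, z} = 3 * k - 4 := by
  have hNx : G.neighborSet x \ {x, y, z} = G.neighborSet x \ {y} := by
    ext w
    simp only [Set.mem_diff, Set.mem_insert_iff, Set.mem_singleton_iff, mem_neighborSet]
    constructor
    · rintro ⟨hw, hw2⟩; exact ⟨hw, fun h => hw2 (Or.inr (Or.inl h))⟩
    · rintro ⟨hw, hw2⟩
      refine ⟨hw, ?_⟩
      rintro (rfl | rfl | rfl)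
      · exact G.irrefl hw
      · exact hw2 rfl
      · exact hxz hw
  have hNz : G.neighborSet z \ {x, y, z} = G.neighborSet z \ {y} := by
    ext w
    simp only [Set.mem_diff, Set.mem_insert_iff, Set.mem_singleton_iff, mem_neighborSet]
    constructor
    · rintro ⟨hw, hw2⟩; exact ⟨hw, fun h => hw2 (Or.inr (Or.inl h))⟩
    · rintro ⟨hw, hw2⟩
      refine ⟨hw, ?_⟩
      rintro (rfl | rfl | rfl)
      · exact hxz hw.symm
      · exact hw2 rfl
      · exact G.irrefl hw
  have hNy : G.neighborSet y \ {x, y, z} = (G.neighborSet y \ {x}) \ {z} := by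
    ext w
    simp only [Set.mem_diff, Set.mem_insert_iff, Set.mem_singleton_iff, mem_neighborSet]
    constructor
    · rintro ⟨hw, hw2⟩
      exact ⟨⟨hw, fun h => hw2 (Or.inl h)⟩, fun h => hw2 (Or.inr (Or.inr h))⟩
    · rintro ⟨⟨hw, hw2⟩, hw3⟩
      refine ⟨hw, ?_⟩
      rintro (rfl | rfl | rfl)
      · exact hw2 rfl
      · exact G.irrefl hw
      · exact hw3 rfl
  have hcx : (G.neighborSet x \ ({x, y, z} : Set V)).ncard = k - 1 := by
    rw [hNx, Set.ncard_diff_singleton_of_mem (show y ∈ G.neighborSet x from hxy)]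
    rw [show (G.neighborSet x).ncard = k from hreg x]
  have hcz : (G.neighborSet z \ ({x, y, z} : Set V)).ncard = k - 1 := by
    rw [hNz, Set.ncard_diff_singleton_of_mem (show y ∈ G.neighborSet z from hyz.symm)]
    rw [show (G.neighborSet z).ncard = k from hreg z]
  have hcy : (G.neighborSet y \ ({x, y, z} : Set V)).ncard = k - 2 := by
    rw [hNy, Set.ncard_diff_singleton_of_mem
      (show z ∈ G.neighborSet y \ {x} from
        ⟨hyz, fun h => hxz' (Set.mem_singleton_iff.mp h).symm⟩),
      Set.ncard_diff_singleton_of_mem (show x ∈ G.neighborSet y from hxy.symm)]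
    rw [show (G.neighborSet y).ncard = k from hreg y]
    omega
  have d1 : Disjoint (bSet G {x, y, z} x) (bSet G {x, y, z} y) :=
    bSet_disjoint (by simp) hxy.ne
  have d2 : Disjoint (bSet G {x, y, z} x) (bSet G {x, y, z} z) :=
    bSet_disjoint (by simp) hxz'
  have d3 : Disjoint (bSet G {x, y, z} y) (bSet G {x, y, z} z) :=
    bSet_disjoint (by simp) hyz.ne
  have hval : dOut G {x, y, z} = (k - 1) + (k - 2) + (k - 1) := by
    rw [dOut_eq_ncard_bdry, boundary_triple,
      Set.ncard_union_eq (Disjoint.union_left d2 d3) (Set.toFinite _) (Set.toFinite _),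
      Set.ncard_union_eq d1 (Set.toFinite _) (Set.toFinite _),
      ncard_bSet, ncard_bSet, ncard_bSet, hcx, hcy, hcz]
  omega

/-! ### Degrees after deleting edges -/

lemma degN_deleteEdges_le [Fintype V] (G : SimpleGraph V) (F : Set (Sym2 V)) (v : V) :
    degN (G.deleteEdges F) v ≤ degN G v := by
  apply Set.ncard_le_ncard _ (Set.toFinite _)
  intro w hw
  rw [mem_neighborSet] at hw ⊢
  exact (deleteEdges_adj.mp hw).1

lemma degN_deleteEdges_ge [Fintype V] (G : SimpleGraph V) (F : Set (Sym2 V)) (v : V) :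
    degN G v - F.ncard ≤ degN (G.deleteEdges F) v := by
  set H := G.deleteEdges F with hH
  have hsub : H.neighborSet v ⊆ G.neighborSet v := by
    intro w hw
    rw [mem_neighborSet] at hw ⊢
    exact (deleteEdges_adj.mp hw).1
  have himg : (fun w => s(v, w)) '' (G.neighborSet v \ H.neighborSet v) ⊆ F := by
    rintro e ⟨w, ⟨hw1, hw2⟩, rfl⟩
    by_contra hef
    exact hw2 (by rw [mem_neighborSet, hH, deleteEdges_adj]; exact ⟨hw1, hef⟩)
  have h1 : (G.neighborSet v \ H.neighborSet v).ncard ≤ F.ncard := by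
    rw [← Set.ncard_image_of_injective _ (fun (a b : V) h => Sym2.congr_right.mp h)]
    exact Set.ncard_le_ncard himg (Set.toFinite _)
  have h2 : (G.neighborSet v \ H.neighborSet v).ncard = degN G v - degN H v :=
    Set.ncard_diff hsub (Set.toFinite _)
  have h3 : degN H v ≤ degN G v := degN_deleteEdges_le G F v
  omega

lemma ncard_incidence [Fintype V] (G : SimpleGraph V) (v : V) :
    {e ∈ G.edgeSet | v ∈ e}.ncard = degN G v := by
  classical
  have h : {e ∈ G.edgeSet | v ∈ e} = G.incidenceSet v := rfl
  rw [h, ← Nat.card_coe_set_eq, Nat.card_congr (G.incidenceSetEquivNeighborSet v),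
    Nat.card_coe_set_eq, degN]

/-! ### Induced subgraphs on two and three vertices -/

lemma pair_induce_connected {H : SimpleGraph V} {x y : V} (hxy : H.Adj x y) :
    (H.induce {x, y}).Connected := by
  have hx : x ∈ ({x, y} : Set V) := Set.mem_insert _ _
  have hy : y ∈ ({x, y} : Set V) := Set.mem_insert_of_mem _ rfl
  have hadj : (H.induce {x, y}).Adj ⟨x, hx⟩ ⟨y, hy⟩ := hxy
  rw [connected_iff]
  refine ⟨?_, ⟨⟨x, hx⟩⟩⟩
  rintro ⟨a, ha⟩ ⟨b, hb⟩
  rcases ha with rfl | ha <;> rcases hb with rfl | hb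
  · rfl
  · rw [Set.mem_singleton_iff] at hb; subst hb; exact hadj.reachable
  · rw [Set.mem_singleton_iff] at ha; subst ha; exact hadj.symm.reachable
  · rw [Set.mem_singleton_iff] at ha hb; subst ha; subst hb; rfl

lemma triple_induce_connected {H : SimpleGraph V} {x y z : V} (hxy : H.Adj x y)
    (hyz : H.Adj y z) : (H.induce {x, y, z}).Connected := by
  have hx : x ∈ ({x, y, z} : Set V) := by simp
  have hy : y ∈ ({x, y, z} : Set V) := by simp
  have hz : z ∈ ({x, y, z} : Set V) := by simp
  have hadj1 : (H.induce {x, y, z}).Adj ⟨x, hx⟩ ⟨y, hy⟩ := hxy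
  have hadj2 : (H.induce {x, y, z}).Adj ⟨y, hy⟩ ⟨z, hz⟩ := hyz
  rw [connected_iff]
  refine ⟨?_, ⟨⟨x, hx⟩⟩⟩
  have key : ∀ a : ({x, y, z} : Set V), (H.induce {x, y, z}).Reachable a ⟨y, hy⟩ := by
    rintro ⟨a, ha⟩
    rcases ha with rfl | rfl | ha
    · exact hadj1.reachable
    · rfl
    · rw [Set.mem_singleton_iff] at ha; subst ha; exact hadj2.symm.reachable
  intro a b
  exact (key a).trans (key b).symm

lemma adj_of_induce_connected {H : SimpleGraph V} {X : Set V} (hc : (H.induce X).Connected)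
    {x y : V} (hx : x ∈ X) (hy : y ∈ X) (hne : x ≠ y) :
    ∃ a ∈ X, a ≠ x ∧ H.Adj x a := by
  have hr : (H.induce X).Reachable ⟨x, hx⟩ ⟨y, hy⟩ := hc.preconnected _ _
  have hsne : (⟨x, hx⟩ : X) ≠ ⟨y, hy⟩ := fun h => hne (congrArg Subtype.val h)
  obtain ⟨a, ha⟩ := exists_adj_of_reachable hr hsne
  have hadj : H.Adj x a.1 := ha
  exact ⟨a.1, a.2, hadj.ne', hadj⟩

end Infra


/-! ### Main lemmas -/

section MainLemmas

variable [Fintype V] {G : SimpleGraph V} {k : ℕ}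

lemma exists_neighbor (hreg : ∀ v, degN G v = k) (hk : 4 ≤ k) (v : V) :
    ∃ w, G.Adj v w := by
  have h := hreg v
  have h2 : (G.neighborSet v).ncard ≠ 0 := by
    rw [show (G.neighborSet v).ncard = degN G v from rfl, h]; omega
  exact Set.nonempty_of_ncard_ne_zero h2

lemma exists_second_neighbor (hreg : ∀ v, degN G v = k) (hk : 4 ≤ k) {v w : V}
    (hvw : G.Adj v w) : ∃ z, G.Adj v z ∧ z ≠ w ∧ z ≠ v := by
  have h1 : (G.neighborSet v \ {w}).ncard = k - 1 := by
    rw [Set.ncard_diff_singleton_of_mem (show w ∈ G.neighborSet v from hvw),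
      show (G.neighborSet v).ncard = degN G v from rfl, hreg v]
  have h2 : (G.neighborSet v \ {w}).Nonempty :=
    Set.nonempty_of_ncard_ne_zero (by rw [h1]; omega)
  obtain ⟨z, hz1, hz2⟩ := h2
  exact ⟨z, hz1, hz2, (Adj.ne' hz1)⟩

lemma xiH_two_eq (hk : 4 ≤ k) (hconn : G.Connected) (hreg : ∀ v, degN G v = k)
    (hg : (4 : ℕ∞) ≤ G.egirth) : xiH G 2 = 3 * k - 4 := by
  -- existence of an induced path on three vertices
  obtain ⟨x⟩ := hconn.nonempty
  obtain ⟨y, hxy⟩ := exists_neighbor hreg hk x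
  obtain ⟨z, hyz, hzx, _⟩ := exists_second_neighbor hreg hk hxy.symm
  have hxz : ¬G.Adj x z := fun h => triangle_free hg hxy hyz h
  have hxz' : x ≠ z := fun h => hzx h.symm
  have hmem : 3 * k - 4 ∈ {n | ∃ X : Set V, X.ncard = 2 + 1 ∧ (G.induce X).Connected ∧
      dOut G X = n} := by
    refine ⟨{x, y, z}, ?_, triple_induce_connected hxy hyz,
      dOut_triple hreg hk hxy hyz hxz hxz'⟩
    exact Set.ncard_eq_three.mpr ⟨x, y, z, hxy.ne, hxz', hyz.ne, rfl⟩
  have hall : ∀ n ∈ {n | ∃ X : Set V, X.ncard = 2 + 1 ∧ (G.induce X).Connected ∧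
      dOut G X = n}, n = 3 * k - 4 := by
    rintro n ⟨X, h3, hc, rfl⟩
    obtain ⟨a, b, c, hab, hac, hbc, rfl⟩ := Set.ncard_eq_three.mp h3
    have ha : a ∈ ({a, b, c} : Set V) := by simp
    have hb : b ∈ ({a, b, c} : Set V) := by simp
    have hcm : c ∈ ({a, b, c} : Set V) := by simp
    have hA : G.Adj a b ∨ G.Adj a c := by
      obtain ⟨w, hw, hw2, hw3⟩ := adj_of_induce_connected hc ha hb hab
      rcases hw with rfl | rfl | rfl
      · exact absurd rfl hw2
      · exact Or.inl hw3
      · exact Or.inr hw3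
    have hB : G.Adj b a ∨ G.Adj b c := by
      obtain ⟨w, hw, hw2, hw3⟩ := adj_of_induce_connected hc hb ha (Ne.symm hab)
      rcases hw with rfl | rfl | rfl
      · exact Or.inl hw3
      · exact absurd rfl hw2
      · exact Or.inr hw3
    have hC : G.Adj c a ∨ G.Adj c b := by
      obtain ⟨w, hw, hw2, hw3⟩ := adj_of_induce_connected hc hcm ha (Ne.symm hac)
      rcases hw with rfl | rfl | rfl
      · exact Or.inl hw3
      · exact Or.inr hw3
      · exact absurd rfl hw2
    by_cases Hab : G.Adj a b <;> by_cases Hbc : G.Adj b c <;> by_cases Hac : G.Adj a c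
    · exact absurd Hac (fun h => triangle_free hg Hab Hbc h)
    · exact dOut_triple hreg hk Hab Hbc Hac hac
    · -- a is the middle vertex
      rw [show ({a, b, c} : Set V) = {b, a, c} from Set.insert_comm a b {c}]
      exact dOut_triple hreg hk Hab.symm Hac Hbc hbc
    · exfalso
      rcases hC with h | h
      · exact Hac h.symm
      · exact Hbc h.symm
    · -- c is the middle vertex
      rw [show ({a, b, c} : Set V) = {a, c, b} by rw [Set.pair_comm b c]]
      exact dOut_triple hreg hk Hac Hbc.symm Hab hab
    · exfalso
      rcases hA with h | h
      · exact Hab h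
      · exact Hac h
    · exfalso
      rcases hB with h | h
      · exact Hab h.symm
      · exact Hbc h
    · exfalso
      rcases hA with h | h
      · exact Hab h
      · exact Hac h
  refine le_antisymm (Nat.sInf_le hmem) (le_csInf ⟨_, hmem⟩ ?_)
  intro n hn
  exact le_of_eq (hall n hn).symm

lemma lambda1_lb (hk : 4 ≤ k) (hconn : G.Connected) (hreg : ∀ v, degN G v = k)
    (hopt : lambdaH G 2 = xiH G 2) (hg : (4 : ℕ∞) ≤ G.egirth)
    {T : Set (Sym2 V)} (hT : IsExtraEdgeCut G 1 T) : 2 * k - 2 ≤ T.ncard := by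
  obtain ⟨hTsub, hTdisc, hTcomp⟩ := hT
  by_cases hex : ∃ c : (G.deleteEdges T).ConnectedComponent, c.supp.ncard = 2
  · obtain ⟨c, hc⟩ := hex
    obtain ⟨x, y, hxy, hsupp⟩ := Set.ncard_eq_two.mp hc
    have hadjT : (G.deleteEdges T).Adj x y := adj_of_supp_pair hsupp hxy
    have hadj : G.Adj x y := (deleteEdges_adj.mp hadjT).1
    have hbd : bdry G {x, y} ⊆ T := by
      rintro e ⟨he, a, haX, b, hbX, rfl⟩
      by_contra heT
      have hadj2 : (G.deleteEdges T).Adj a b :=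
        deleteEdges_adj.mpr ⟨(G.mem_edgeSet).mp he, heT⟩
      have haS : a ∈ c.supp := by rw [hsupp]; exact haX
      have hbS : b ∈ c.supp := mem_supp_of_adj haS hadj2
      rw [hsupp] at hbS
      exact hbX hbS
    have h1 : dOut G {x, y} ≤ T.ncard := by
      rw [dOut_eq_ncard_bdry]
      exact Set.ncard_le_ncard hbd (Set.toFinite _)
    obtain ⟨h2, _⟩ := dOut_pair hadj
    rw [hreg x, hreg y] at h2
    omega
  · have hT2 : IsExtraEdgeCut G 2 T := by
      refine ⟨hTsub, hTdisc, fun c => ?_⟩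
      have h1 := hTcomp c
      have h2 : c.supp.ncard ≠ 2 := fun h => hex ⟨c, h⟩
      omega
    have hle : lambdaH G 2 ≤ T.ncard := Nat.sInf_le ⟨T, hT2, rfl⟩
    rw [hopt, xiH_two_eq hk hconn hreg hg] at hle
    omega

lemma edge_conn (hk : 4 ≤ k) (hconn : G.Connected) (hreg : ∀ v, degN G v = k)
    (hopt : lambdaH G 2 = xiH G 2) (hg : (4 : ℕ∞) ≤ G.egirth)
    {C : Set V} (hCne : C.Nonempty) (hCuniv : C ≠ Set.univ) : k ≤ dOut G C := by
  have hcrossG : ∀ a b, a ∈ C → b ∉ C → G.Adj a b → s(a, b) ∈ bdry G C :=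
    fun a b ha hb hadj => ⟨(G.mem_edgeSet).mpr hadj, a, ha, b, hb, rfl⟩
  have hcross : ∀ a b, a ∈ C → b ∉ C → ¬(G.deleteEdges (bdry G C)).Adj a b := by
    intro a b ha hb hadj
    exact (deleteEdges_adj.mp hadj).2 (hcrossG a b ha hb (deleteEdges_adj.mp hadj).1)
  obtain ⟨u, hu⟩ := hCne
  obtain ⟨w, hw⟩ : ∃ w, w ∉ C := by
    by_contra h
    push_neg at h
    exact hCuniv (Set.eq_univ_iff_forall.mpr h)
  have hdisc : ¬(G.deleteEdges (bdry G C)).Connected := by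
    intro h
    obtain ⟨a, b, ha, hb, hab⟩ := cross_of_reachable (h.preconnected u w) hu hw
    exact hcross a b ha hb hab
  by_cases hiso : ∃ c : (G.deleteEdges (bdry G C)).ConnectedComponent, c.supp.ncard = 1
  · obtain ⟨c, hc⟩ := hiso
    obtain ⟨v, hv⟩ := Set.ncard_eq_one.mp hc
    have hinc : {e ∈ G.edgeSet | v ∈ e} ⊆ bdry G C := by
      rintro e ⟨he, hve⟩
      obtain ⟨w', rfl⟩ := Sym2.mem_iff_exists.mp hve
      have hadj : G.Adj v w' := (G.mem_edgeSet).mp he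
      by_contra heB
      have hadj2 : (G.deleteEdges (bdry G C)).Adj v w' := deleteEdges_adj.mpr ⟨hadj, heB⟩
      have hvs : v ∈ c.supp := by rw [hv]; exact Set.mem_singleton v
      have hws : w' ∈ c.supp := mem_supp_of_adj hvs hadj2
      rw [hv] at hws
      exact hadj.ne' hws
    have h1 : {e ∈ G.edgeSet | v ∈ e}.ncard ≤ (bdry G C).ncard :=
      Set.ncard_le_ncard hinc (Set.toFinite _)
    rw [ncard_incidence, hreg v] at h1
    rw [dOut_eq_ncard_bdry]
    exact h1
  · have hcut : IsExtraEdgeCut G 1 (bdry G C) := by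
      refine ⟨bdry_subset_edgeSet G C, hdisc, fun c => ?_⟩
      have h0 : c.supp.Nonempty := supp_nonempty c
      have h1 : c.supp.ncard ≠ 0 := by
        have := (Set.ncard_pos (Set.toFinite _)).mpr h0
        omega
      have h2 : c.supp.ncard ≠ 1 := fun h => hiso ⟨c, h⟩
      omega
    have := lambda1_lb hk hconn hreg hopt hg hcut
    rw [dOut_eq_ncard_bdry]
    omega

lemma H_connected (hk : 4 ≤ k) (hconn : G.Connected) (hreg : ∀ v, degN G v = k)
    (hopt : lambdaH G 2 = xiH G 2) (hg : (4 : ℕ∞) ≤ G.egirth)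
    {F : Set (Sym2 V)} (hF : F ⊆ G.edgeSet) (hFc : F.ncard ≤ k - 2) :
    (G.deleteEdges F).Connected := by
  by_contra hnc
  have hne : Nonempty V := hconn.nonempty
  have hex : ∃ u w, ¬(G.deleteEdges F).Reachable u w := by
    by_contra h
    push_neg at h
    exact hnc ((connected_iff _).mpr ⟨fun u w => h u w, hne⟩)
  obtain ⟨u, w, hur⟩ := hex
  have hu : u ∈ {v | (G.deleteEdges F).Reachable u v} := Reachable.refl u
  have hw : w ∉ {v | (G.deleteEdges F).Reachable u v} := hur
  have hbd : bdry G {v | (G.deleteEdges F).Reachable u v} ⊆ F := by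
    rintro e ⟨he, a, ha, b, hb, rfl⟩
    by_contra heF
    have hadj : (G.deleteEdges F).Adj a b := deleteEdges_adj.mpr ⟨(G.mem_edgeSet).mp he, heF⟩
    exact hb (Reachable.trans ha hadj.reachable)
  have h1 : dOut G {v | (G.deleteEdges F).Reachable u v} ≤ F.ncard := by
    rw [dOut_eq_ncard_bdry]
    exact Set.ncard_le_ncard hbd (Set.toFinite _)
  have h2 : k ≤ dOut G {v | (G.deleteEdges F).Reachable u v} :=
    edge_conn hk hconn hreg hopt hg ⟨u, hu⟩
      (fun h => hw (h ▸ Set.mem_univ w))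
  omega


lemma degH_two (hk : 4 ≤ k) (hreg : ∀ v, degN G v = k)
    {F : Set (Sym2 V)} (hFc : F.ncard ≤ k - 2) (v : V) :
    2 ≤ degN (G.deleteEdges F) v := by
  have h1 := degN_deleteEdges_ge G F v
  have h2 := hreg v
  omega

lemma degH_le (hreg : ∀ v, degN G v = k) (F : Set (Sym2 V)) (v : V) :
    degN (G.deleteEdges F) v ≤ k := by
  have h1 := degN_deleteEdges_le G F v
  have h2 := hreg v
  omega

lemma boundary_pair_cut (hk : 4 ≤ k) (hreg : ∀ v, degN G v = k)
    (hg : (4 : ℕ∞) ≤ G.egirth) {F : Set (Sym2 V)} (hFc : F.ncard ≤ k - 2)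
    {x y : V} (hxy : (G.deleteEdges F).Adj x y) :
    IsExtraEdgeCut (G.deleteEdges F) 1 (bdry (G.deleteEdges F) {x, y}) := by
  have hGxy : G.Adj x y := (deleteEdges_adj.mp hxy).1
  have hedgexy : s(x, y) ∉ bdry (G.deleteEdges F) {x, y} := by
    rintro ⟨_, a, ha, b, hb, he⟩
    rcases Sym2.eq_iff.mp he with ⟨rfl, rfl⟩ | ⟨rfl, rfl⟩
    · exact hb (Set.mem_insert_of_mem _ rfl)
    · exact hb (Set.mem_insert _ _)
  have houtside : ∀ v w : V, v ∉ ({x, y} : Set V) → w ∉ ({x, y} : Set V) →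
      s(v, w) ∉ bdry (G.deleteEdges F) {x, y} := by
    rintro v w hv hw ⟨_, a, ha, b, hb, he⟩
    rcases Sym2.eq_iff.mp he with ⟨rfl, _⟩ | ⟨_, rfl⟩
    · exact hv ha
    · exact hw ha
  have hcross : ∀ a b : V, a ∈ ({x, y} : Set V) → b ∉ ({x, y} : Set V) →
      ¬((G.deleteEdges F).deleteEdges (bdry (G.deleteEdges F) {x, y})).Adj a b := by
    intro a b ha hb hadj
    obtain ⟨hadjH, hnS⟩ := deleteEdges_adj.mp hadj
    exact hnS ⟨(SimpleGraph.mem_edgeSet _).mpr hadjH, a, ha, b, hb, rfl⟩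
  obtain ⟨z, hzadj, hzy, hzx⟩ := exists_second_neighbor hreg hk hGxy
  have hz : z ∉ ({x, y} : Set V) := by
    rintro (rfl | hz2)
    · exact hzx rfl
    · exact hzy (Set.mem_singleton_iff.mp hz2)
  refine ⟨bdry_subset_edgeSet _ _, ?_, ?_⟩
  · intro hcon
    obtain ⟨a, b, ha, hb, hab⟩ :=
      cross_of_reachable (hcon.preconnected x z) (Set.mem_insert _ _) hz
    exact hcross a b ha hb hab
  · intro c
    obtain ⟨v, hv⟩ := supp_nonempty c
    have hbig : ∃ w, w ≠ v ∧ w ∈ c.supp := by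
      by_cases hvxy : v ∈ ({x, y} : Set V)
      · rcases hvxy with rfl | hvy
        · have hadj2 : ((G.deleteEdges F).deleteEdges (bdry (G.deleteEdges F) {v, y})).Adj v y :=
            deleteEdges_adj.mpr ⟨hxy, hedgexy⟩
          exact ⟨y, hxy.ne', mem_supp_of_adj hv hadj2⟩
        · rw [Set.mem_singleton_iff] at hvy
          subst hvy
          have hadj2 : ((G.deleteEdges F).deleteEdges (bdry (G.deleteEdges F) {x, v})).Adj x v :=
            deleteEdges_adj.mpr ⟨hxy, hedgexy⟩
          exact ⟨x, hxy.ne, mem_supp_of_adj hv hadj2.symm⟩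
      · by_cases hnb : ∃ w, ((G.deleteEdges F).deleteEdges (bdry (G.deleteEdges F) {x, y})).Adj v w
        · obtain ⟨w, hw⟩ := hnb
          exact ⟨w, hw.ne', mem_supp_of_adj hv hw⟩
        · exfalso
          push_neg at hnb
          have hNsub : (G.deleteEdges F).neighborSet v ⊆ {x, y} := by
            intro w' hw'
            by_contra hw'xy
            exact hnb w' (deleteEdges_adj.mpr ⟨hw', houtside v w' hvxy hw'xy⟩)
          have h2 : ({x, y} : Set V).ncard ≤ ((G.deleteEdges F).neighborSet v).ncard := by
            rw [Set.ncard_pair hxy.ne]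
            exact degH_two hk hreg hFc v
          have heq : (G.deleteEdges F).neighborSet v = {x, y} :=
            Set.eq_of_subset_of_ncard_le hNsub h2 (Set.toFinite _)
          have hvx : (G.deleteEdges F).Adj v x := by
            have : x ∈ (G.deleteEdges F).neighborSet v := by
              rw [heq]; exact Set.mem_insert _ _
            exact this
          have hvy : (G.deleteEdges F).Adj v y := by
            have : y ∈ (G.deleteEdges F).neighborSet v := by
              rw [heq]; exact Set.mem_insert_of_mem _ rfl
            exact this
          exact triangle_free hg hGxy ((deleteEdges_adj.mp hvy).1.symm)
            ((deleteEdges_adj.mp hvx).1.symm)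
    obtain ⟨w, hwv, hws⟩ := hbig
    rw [Set.one_lt_ncard (Set.toFinite _)]
    exact ⟨w, hws, v, hv, hwv⟩

lemma main_superlambda (hk : 4 ≤ k) (hconn : G.Connected) (hreg : ∀ v, degN G v = k)
    (hopt : lambdaH G 2 = xiH G 2) (hg : (4 : ℕ∞) ≤ G.egirth)
    {F : Set (Sym2 V)} (hF : F ⊆ G.edgeSet) (hFc : F.ncard ≤ k - 2) :
    SuperLambda (G.deleteEdges F) 1 := by
  have hHconn : (G.deleteEdges F).Connected := H_connected hk hconn hreg hopt hg hF hFc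
  -- an edge of H
  obtain ⟨x0⟩ := hconn.nonempty
  obtain ⟨w0, hw0⟩ := exists_neighbor hreg hk x0
  obtain ⟨y0, hxy0⟩ := exists_adj_of_reachable (hHconn.preconnected x0 w0) hw0.ne
  -- membership of pairs in the ξ-set
  have mem_xi : ∀ {a b : V}, (G.deleteEdges F).Adj a b →
      dOut (G.deleteEdges F) {a, b} ∈ {n | ∃ X : Set V, X.ncard = 1 + 1 ∧
        ((G.deleteEdges F).induce X).Connected ∧ dOut (G.deleteEdges F) X = n} := by
    intro a b hab
    exact ⟨{a, b}, by rw [Set.ncard_pair hab.ne], pair_induce_connected hab, rfl⟩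
  have hpair_le : ∀ {a b : V}, (G.deleteEdges F).Adj a b →
      dOut (G.deleteEdges F) {a, b} ≤ 2 * k - 2 := by
    intro a b hab
    obtain ⟨h1, _⟩ := dOut_pair hab
    have h2 := degH_le hreg F a
    have h3 := degH_le hreg F b
    omega
  have hxile : xiH (G.deleteEdges F) 1 ≤ 2 * k - 2 :=
    le_trans (Nat.sInf_le (mem_xi hxy0)) (hpair_le hxy0)
  -- lower bounds for 1-extra edge-cuts of H
  have hcase2 : ∀ S : Set (Sym2 V), IsExtraEdgeCut (G.deleteEdges F) 1 S →
      (∃ c : ((G.deleteEdges F).deleteEdges S).ConnectedComponent, c.supp.ncard = 2) →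
      xiH (G.deleteEdges F) 1 ≤ S.ncard := by
    rintro S hS ⟨c, hc⟩
    obtain ⟨x, y, hxy, hsupp⟩ := Set.ncard_eq_two.mp hc
    have hadjS : ((G.deleteEdges F).deleteEdges S).Adj x y := adj_of_supp_pair hsupp hxy
    have hadj : (G.deleteEdges F).Adj x y := (deleteEdges_adj.mp hadjS).1
    have hbd : bdry (G.deleteEdges F) {x, y} ⊆ S := by
      rintro e ⟨he, a, haX, b, hbX, rfl⟩
      by_contra heS
      have hadj2 : ((G.deleteEdges F).deleteEdges S).Adj a b :=
        deleteEdges_adj.mpr ⟨(SimpleGraph.mem_edgeSet _).mp he, heS⟩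
      have haS : a ∈ c.supp := by rw [hsupp]; exact haX
      have hbS : b ∈ c.supp := mem_supp_of_adj haS hadj2
      rw [hsupp] at hbS
      exact hbX hbS
    have h1 : dOut (G.deleteEdges F) {x, y} ≤ S.ncard := by
      rw [dOut_eq_ncard_bdry]
      exact Set.ncard_le_ncard hbd (Set.toFinite _)
    exact le_trans (Nat.sInf_le (mem_xi hadj)) h1
  have hcase3 : ∀ S : Set (Sym2 V), IsExtraEdgeCut (G.deleteEdges F) 1 S →
      (∀ c : ((G.deleteEdges F).deleteEdges S).ConnectedComponent, c.supp.ncard ≠ 2) →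
      3 * k - 4 ≤ F.ncard + S.ncard := by
    intro S hS hno
    obtain ⟨hSsub, hSdisc, hScomp⟩ := hS
    have hcut2 : IsExtraEdgeCut G 2 (F ∪ S) := by
      refine ⟨Set.union_subset hF ?_, ?_, ?_⟩
      · intro e he
        have := hSsub he
        rw [edgeSet_deleteEdges] at this
        exact this.1
      · rw [← deleteEdges_deleteEdges]
        exact hSdisc
      · rw [← deleteEdges_deleteEdges]
        intro c
        have h1 := hScomp c
        have h2 := hno c
        omega
    have hle : lambdaH G 2 ≤ (F ∪ S).ncard := Nat.sInf_le ⟨F ∪ S, hcut2, rfl⟩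
    rw [hopt, xiH_two_eq hk hconn hreg hg] at hle
    have := Set.ncard_union_le F S
    omega
  -- the boundary of the found edge is a 1-extra edge-cut
  have hcut0 : IsExtraEdgeCut (G.deleteEdges F) 1 (bdry (G.deleteEdges F) {x0, y0}) :=
    boundary_pair_cut hk hreg hg hFc hxy0
  have hlconn : LambdaConn (G.deleteEdges F) 1 := ⟨_, hcut0⟩
  -- λ' = ξ₁ for H
  have hlam_le : lambdaH (G.deleteEdges F) 1 ≤ xiH (G.deleteEdges F) 1 := by
    have hne : {n | ∃ X : Set V, X.ncard = 1 + 1 ∧ ((G.deleteEdges F).induce X).Connected ∧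
        dOut (G.deleteEdges F) X = n}.Nonempty := ⟨_, mem_xi hxy0⟩
    obtain ⟨X, hX2, hXc, hXd⟩ := Nat.sInf_mem hne
    obtain ⟨a, b, hab, rfl⟩ := Set.ncard_eq_two.mp hX2
    have hadj : (G.deleteEdges F).Adj a b := by
      obtain ⟨w, hw, hw2, hw3⟩ := adj_of_induce_connected hXc (Set.mem_insert _ _)
        (Set.mem_insert_of_mem _ rfl) hab
      rcases hw with rfl | hw
      · exact absurd rfl hw2
      · rw [Set.mem_singleton_iff] at hw
        subst hw
        exact hw3
    have hcut : IsExtraEdgeCut (G.deleteEdges F) 1 (bdry (G.deleteEdges F) {a, b}) :=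
      boundary_pair_cut hk hreg hg hFc hadj
    have h1 : lambdaH (G.deleteEdges F) 1 ≤ (bdry (G.deleteEdges F) {a, b}).ncard :=
      Nat.sInf_le ⟨_, hcut, rfl⟩
    rw [← dOut_eq_ncard_bdry] at h1
    have hXd' : dOut (G.deleteEdges F) {a, b} = xiH (G.deleteEdges F) 1 := hXd
    rw [← hXd']
    exact h1
  have hlam_ge : xiH (G.deleteEdges F) 1 ≤ lambdaH (G.deleteEdges F) 1 := by
    refine le_csInf ⟨_, _, hcut0, rfl⟩ ?_
    rintro n ⟨S, hS, rfl⟩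
    by_cases hex : ∃ c : ((G.deleteEdges F).deleteEdges S).ConnectedComponent, c.supp.ncard = 2
    · exact hcase2 S hS hex
    · have h3 := hcase3 S hS (fun c hc => hex ⟨c, hc⟩)
      omega
  have hlamxi : lambdaH (G.deleteEdges F) 1 = xiH (G.deleteEdges F) 1 :=
    le_antisymm hlam_le hlam_ge
  refine ⟨hHconn, hlconn, hlamxi, ?_⟩
  -- every minimum 1-extra edge-cut isolates an edge
  intro S hS hSc
  by_contra hno
  have hno2 : ∀ c : ((G.deleteEdges F).deleteEdges S).ConnectedComponent,
      c.supp.ncard ≠ 2 := by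
    intro c hc
    exact hno ⟨c, hc⟩
  have h3 : 3 * k - 4 ≤ F.ncard + S.ncard := hcase3 S hS hno2
  have hSxi : S.ncard = xiH (G.deleteEdges F) 1 := by rw [hSc, hlamxi]
  by_cases hF3 : F.ncard = k - 2
  · -- F is nonempty and ξ(H) = 2k-2, which is impossible
    have hxieq : xiH (G.deleteEdges F) 1 = 2 * k - 2 := by omega
    have hFne : F.Nonempty := Set.nonempty_of_ncard_ne_zero (by omega)
    obtain ⟨e, he⟩ := hFne
    induction e using Sym2.ind with
    | _ a b =>
      have hGab : G.Adj a b := (SimpleGraph.mem_edgeSet _).mp (hF he)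
      have hnH : ¬(G.deleteEdges F).Adj a b := fun h => (deleteEdges_adj.mp h).2 he
      have hdegb : degN (G.deleteEdges F) a ≤ k - 1 := by
        have hsub : (G.deleteEdges F).neighborSet a ⊆ G.neighborSet a \ {b} := by
          intro w hw
          refine ⟨(deleteEdges_adj.mp hw).1, ?_⟩
          rintro rfl
          exact hnH hw
        have h4 : (G.neighborSet a \ {b}).ncard = k - 1 := by
          rw [Set.ncard_diff_singleton_of_mem (show b ∈ G.neighborSet a from hGab),
            show (G.neighborSet a).ncard = degN G a from rfl, hreg a]
        have h5 := Set.ncard_le_ncard hsub (Set.toFinite _)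
        rw [h4] at h5
        exact h5
      have hdeg2a : 2 ≤ degN (G.deleteEdges F) a := degH_two hk hreg hFc a
      have hNne : ((G.deleteEdges F).neighborSet a).Nonempty :=
        Set.nonempty_of_ncard_ne_zero (by
          rw [show ((G.deleteEdges F).neighborSet a).ncard = degN (G.deleteEdges F) a from rfl]
          omega)
      obtain ⟨c0, hc0⟩ := hNne
      have hadjc : (G.deleteEdges F).Adj a c0 := hc0
      obtain ⟨h6, _⟩ := dOut_pair hadjc
      have h7 := degH_le hreg F c0
      have h8 : dOut (G.deleteEdges F) {a, c0} ≤ 2 * k - 3 := by omega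
      have h9 : xiH (G.deleteEdges F) 1 ≤ 2 * k - 3 :=
        le_trans (Nat.sInf_le (mem_xi hadjc)) h8
      omega
  · -- |F| ≤ k - 3, contradiction by counting
    omega


end MainLemmas

/-- A `k`-regular `λ''`-optimal graph with `k ≥ 4` and girth at least `4` is super-`λ'`
and satisfies `k - 2 ≤ ρ'(G) ≤ k - 1`. -/
theorem stmt11 {V : Type*} [Fintype V] (G : SimpleGraph V) (k : ℕ) (hk : 4 ≤ k)
    (hconn : G.Connected) (hreg : ∀ v, degN G v = k)
    (hl2 : LambdaConn G 2) (hopt : lambdaH G 2 = xiH G 2)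
    (hg : (4 : ℕ∞) ≤ G.egirth) :
    SuperLambda G 1 ∧ k - 2 ≤ rhoH G 1 ∧ rhoH G 1 ≤ k - 1 := by
  have hmain : ∀ F : Set (Sym2 V), F ⊆ G.edgeSet → F.ncard ≤ k - 2 →
      SuperLambda (G.deleteEdges F) 1 :=
    fun F hF hFc => main_superlambda hk hconn hreg hopt hg hF hFc
  have hsuper : SuperLambda G 1 := by
    have h := hmain ∅ (Set.empty_subset _) (by simp)
    rwa [deleteEdges_empty] at h
  have hub : k - 1 ∈ upperBounds {m : ℕ | ∀ F : Set (Sym2 V), F ⊆ G.edgeSet → F.ncard ≤ m →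
      SuperLambda (G.deleteEdges F) 1} := by
    intro m hm
    by_contra hmk
    push_neg at hmk
    obtain ⟨v⟩ := hconn.nonempty
    have hFv : {e ∈ G.edgeSet | v ∈ e} ⊆ G.edgeSet := fun e he => he.1
    have hcard : {e ∈ G.edgeSet | v ∈ e}.ncard = k := by rw [ncard_incidence, hreg v]
    have hsl := hm _ hFv (by omega)
    have hcon := hsl.1
    obtain ⟨w, hw⟩ := exists_neighbor hreg hk v
    obtain ⟨a, ha⟩ := exists_adj_of_reachable (hcon.preconnected v w) hw.ne
    have hmem : s(v, a) ∈ {e ∈ G.edgeSet | v ∈ e} :=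
      ⟨(SimpleGraph.mem_edgeSet _).mpr (deleteEdges_adj.mp ha).1, Sym2.mem_mk_left _ _⟩
    exact (deleteEdges_adj.mp ha).2 hmem
  refine ⟨hsuper, ?_, csSup_le' hub⟩
  exact le_csSup ⟨k - 1, hub⟩ (fun F hF hFc => hmain F hF hFc)
end

section
/- Let G be a finite simple graph whose vertex connectivity is at least m. Then for any vertex subset X ⊆ V(G) with |X| ≥ m and |V(G) \ X| ≥ m, the set of edges of G with exactly one endpoint in X contains at least m pairwise disjoint (independent) edges, i.e., a matching of size m. -/
open SimpleGraph

variable {V : Type*}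

/-- `G` is `m`-connected: its vertex connectivity is at least `m`, i.e. `G` has more than
`m` vertices and removing fewer than `m` vertices leaves a connected graph. -/
def IsKConnected {V : Type*} [Fintype V] (G : SimpleGraph V) (m : ℕ) : Prop :=
  m < Fintype.card V ∧ ∀ S : Set V, S.ncard < m → (G.induce Sᶜ).Connected

private lemma walk_cross {W : Type*} {H : SimpleGraph W} {P : W → Prop} {a b : W}
    (w : H.Walk a b) (ha : P a) (hb : ¬ P b) :
    ∃ u v, H.Adj u v ∧ P u ∧ ¬ P v := by
  induction w with
  | nil => exact absurd ha hb
  | @cons u v w h p ih =>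
    by_cases hc : P v
    · exact ih hc hb
    · exact ⟨_, _, h, ha, hc⟩

/-- In an `m`-connected graph, for any `X` with `|X| ≥ m` and `|V \ X| ≥ m`, the set of
edges with exactly one endpoint in `X` contains `m` pairwise disjoint edges. -/
theorem stmt12 {V : Type*} [Fintype V] (G : SimpleGraph V) (m : ℕ)
    (hconn : IsKConnected G m) (X : Set V) (hX : m ≤ X.ncard) (hXc : m ≤ Xᶜ.ncard) :
    ∃ M : Finset (Sym2 V), M.card = m ∧
      (∀ e ∈ M, e ∈ G.edgeSet ∧ ∃ x ∈ X, ∃ y ∈ Xᶜ, e = s(x, y)) ∧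
      (M : Set (Sym2 V)).Pairwise (fun e f => ∀ v, v ∈ e → v ∉ f) := by
  classical
  set d := X.ncard - m with hd
  have hXcard : X.ncard = m + d := by omega
  have hXfcard : Fintype.card ↥X = m + d := by
    rw [← hXcard, Set.ncard_eq_toFinset_card', Set.toFinset_card]
  have hXccard : Xᶜ.ncard = Fintype.card ↥(Xᶜ) := by
    rw [Set.ncard_eq_toFinset_card', Set.toFinset_card]
  set t : ↥X → Finset (↥(Xᶜ) ⊕ Fin d) := fun x =>
    Finset.univ.filter (fun b => Sum.elim (fun y : ↥(Xᶜ) => G.Adj x y) (fun _ => True) b)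
    with ht
  have hall : ∀ s : Finset ↥X, s.card ≤ (s.biUnion t).card := by
    intro A
    by_contra hlt
    push_neg at hlt
    have hAne : A.Nonempty := by
      rcases A.eq_empty_or_nonempty with rfl | h
      · simp at hlt
      · exact h
    set NA : Finset ↥(Xᶜ) := Finset.univ.filter (fun y => ∃ x ∈ A, G.Adj x y) with hNA
    have hbU : A.biUnion t = NA.image Sum.inl ∪ Finset.univ.image Sum.inr := by
      ext b
      cases b with
      | inl y => simp [ht, hNA, Sum.inl.injEq]
      | inr i =>
        simp only [Finset.mem_biUnion, Finset.mem_union, Finset.mem_image,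
          Finset.mem_filter, Finset.mem_univ, true_and, Sum.elim_inr]
        constructor
        · intro _; exact Or.inr ⟨i, rfl⟩
        · intro _; exact ⟨hAne.choose, hAne.choose_spec, by simp [ht]⟩
    have hcard : (A.biUnion t).card = NA.card + d := by
      rw [hbU, Finset.card_union_of_disjoint, Finset.card_image_of_injective _ Sum.inl_injective,
        Finset.card_image_of_injective _ Sum.inr_injective]
      · simp
      · simp [Finset.disjoint_left]
    rw [hcard] at hlt
    have hAle : A.card ≤ m + d := by
      calc A.card ≤ Finset.univ.card := Finset.card_le_univ A
      _ = m + d := by rw [Finset.card_univ, hXfcard]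
    -- the separating set
    set S : Set V := (Subtype.val '' (NA : Set ↥(Xᶜ))) ∪ (X \ (Subtype.val '' (A : Set ↥X)))
      with hS
    have hNAcard : (Subtype.val '' (NA : Set ↥(Xᶜ))).ncard = NA.card := by
      rw [Set.ncard_image_of_injective _ Subtype.val_injective, Set.ncard_coe_finset]
    have hAsub : (Subtype.val '' (A : Set ↥X)) ⊆ X := by
      rintro _ ⟨x, -, rfl⟩; exact x.2
    have hdiffcard : (X \ (Subtype.val '' (A : Set ↥X))).ncard = X.ncard - A.card := by
      rw [Set.ncard_diff hAsub,
        Set.ncard_image_of_injective _ Subtype.val_injective, Set.ncard_coe_finset]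
    have hSlt : S.ncard < m := by
      have h1 : S.ncard ≤ NA.card + (X.ncard - A.card) := by
        rw [hS, ← hNAcard, ← hdiffcard]
        exact Set.ncard_union_le _ _
      omega
    have hcon := hconn.2 S hSlt
    obtain ⟨a₀, ha₀A⟩ := hAne
    have ha₀S : (a₀ : V) ∈ Sᶜ := by
      intro hmem
      rcases hmem with ⟨y, -, hy⟩ | ⟨-, hnot⟩
      · exact y.2 (hy ▸ a₀.2)
      · exact hnot ⟨a₀, ha₀A, rfl⟩
    have hNAlt : (Subtype.val '' (NA : Set ↥(Xᶜ))).ncard < Xᶜ.ncard := by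
      rw [hNAcard]; omega
    obtain ⟨b₀, hb₀Xc, hb₀NA⟩ :
        ∃ b₀ ∈ Xᶜ, b₀ ∉ Subtype.val '' (NA : Set ↥(Xᶜ)) := by
      by_contra hcon'
      push_neg at hcon'
      exact absurd (Set.ncard_le_ncard hcon' (Set.toFinite _)) (by omega)
    have hb₀S : b₀ ∈ Sᶜ := by
      intro hmem
      rcases hmem with h | ⟨hX', -⟩
      · exact hb₀NA h
      · exact hb₀Xc hX'
    obtain ⟨w⟩ := hcon.preconnected ⟨(a₀ : V), ha₀S⟩ ⟨b₀, hb₀S⟩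
    obtain ⟨u, v, hadj, huX, hvX⟩ :=
      walk_cross (P := fun z : ↥(Sᶜ) => (z : V) ∈ X) w a₀.2 hb₀Xc
    have hadj' : G.Adj (u : V) (v : V) := hadj
    have huA : (u : V) ∈ Subtype.val '' (A : Set ↥X) := by
      by_contra hnA
      exact u.2 (Or.inr ⟨huX, hnA⟩)
    obtain ⟨xu, hxuA, hxu⟩ := huA
    have hvNA : (v : V) ∈ Subtype.val '' (NA : Set ↥(Xᶜ)) := by
      refine ⟨⟨(v : V), hvX⟩, ?_, rfl⟩
      simp only [hNA, Finset.coe_filter, Set.mem_setOf_eq, Finset.mem_univ, true_and]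
      exact ⟨xu, hxuA, by rw [hxu]; exact hadj'⟩
    exact v.2 (Or.inl hvNA)
  obtain ⟨f, hfinj, hft⟩ := (Finset.all_card_le_biUnion_card_iff_exists_injective t).mp hall
  -- extract m matched pairs
  have hBle : (Finset.univ.filter (fun x : ↥X => ¬ (f x).isLeft)).card ≤ d := by
    calc (Finset.univ.filter (fun x : ↥X => ¬ (f x).isLeft)).card
        ≤ (Finset.univ.image (Sum.inr : Fin d → ↥(Xᶜ) ⊕ Fin d)).card := by
          apply Finset.card_le_card_of_injOn f
          · intro x hx
            have hx2 := (Finset.mem_filter.mp (Finset.mem_coe.mp hx)).2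
            simp only [Sum.not_isLeft, Sum.isRight_iff] at hx2
            obtain ⟨i, hi⟩ := hx2
            simp only [Finset.coe_image, Finset.coe_univ, Set.mem_image, Set.mem_univ, true_and]
            exact ⟨i, hi.symm⟩
          · exact fun x _ y _ h => hfinj h
      _ ≤ Finset.univ.card := Finset.card_image_le.trans (le_of_eq rfl)
      _ = d := by simp
  have hA₀card : m ≤ (Finset.univ.filter (fun x : ↥X => (f x).isLeft)).card := by
    have h2 := Finset.card_filter_add_card_filter_not
      (s := (Finset.univ : Finset ↥X)) (p := fun x => (f x).isLeft)
    rw [Finset.card_univ, hXfcard] at h2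
    omega
  obtain ⟨A₁, hA₁sub, hA₁card⟩ := Finset.exists_subset_card_eq hA₀card
  set g : ↥X → V := fun x => Sum.elim (fun y : ↥(Xᶜ) => (y : V)) (fun _ => (x : V)) (f x)
    with hg
  have key : ∀ x ∈ A₁, G.Adj (x : V) (g x) ∧ g x ∈ Xᶜ := by
    intro x hx
    have hxl := (Finset.mem_filter.mp (hA₁sub hx)).2
    rw [Sum.isLeft_iff] at hxl
    obtain ⟨y, hy⟩ := hxl
    have h3 := hft x
    rw [hy] at h3
    simp only [ht, Finset.mem_filter, Sum.elim_inl] at h3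
    simp only [hg, hy, Sum.elim_inl]
    exact ⟨h3.2, y.2⟩
  have ginj : ∀ x ∈ A₁, ∀ x' ∈ A₁, g x = g x' → x = x' := by
    intro x hx x' hx' hgg
    have hxl := (Finset.mem_filter.mp (hA₁sub hx)).2
    have hxl' := (Finset.mem_filter.mp (hA₁sub hx')).2
    rw [Sum.isLeft_iff] at hxl hxl'
    obtain ⟨y, hy⟩ := hxl
    obtain ⟨y', hy'⟩ := hxl'
    apply hfinj
    rw [hy, hy']
    simp only [hg, hy, hy', Sum.elim_inl] at hgg
    exact congrArg Sum.inl (Subtype.ext hgg)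
  refine ⟨A₁.image (fun x => s(x.1, g x)), ?_, ?_, ?_⟩
  · rw [Finset.card_image_of_injOn, hA₁card]
    intro x hx x' hx' he
    rw [Sym2.eq_iff] at he
    rcases he with ⟨h1, -⟩ | ⟨h1, h2⟩
    · exact Subtype.ext h1
    · exact absurd (h1 ▸ x.2) (key x' hx').2
  · intro e he
    obtain ⟨x, hx, rfl⟩ := Finset.mem_image.mp he
    exact ⟨(key x hx).1, (x : V), x.2, g x, (key x hx).2, rfl⟩
  · intro e he f' hf' hne v hve hvf
    obtain ⟨x, hx, rfl⟩ := Finset.mem_image.mp (Finset.mem_coe.mp he)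
    obtain ⟨x', hx', rfl⟩ := Finset.mem_image.mp (Finset.mem_coe.mp hf')
    have hxx' : x ≠ x' := by rintro rfl; exact hne rfl
    rw [Sym2.mem_iff] at hve hvf
    rcases hve with rfl | rfl <;> rcases hvf with h | h
    · exact hxx' (Subtype.ext h)
    · exact (key x' hx').2 (h ▸ x.2)
    · exact (key x hx).2 (h.symm ▸ x'.2)
    · exact hxx' (ginj x hx x' hx' h)
end
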